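/- arXiv:1205.0377 — 12 statements merged into one kernel-verified Lean document; each statement's English description precedes it below -/
import Mathlib

section
/- For every x in (0, π/2), we have tan x < x + (tan x)³/3. -/
theorem tan_upper (x : ℝ) (hx : 0 < x) (hx2 : x < Real.pi / 2) :
    Real.tan x < x + (Real.tan x) ^ 3 / 3 := by
  set f : ℝ → ℝ := fun y => y + Real.tan y ^ 3 / 3 - Real.tan y with hf
  have key : StrictMonoOn f (Set.Ico 0 (Real.pi / 2)) := by
    apply strictMonoOn_of_deriv_pos (convex_Ico _ _)
    · have hcont : ContinuousOn Real.tan (Set.Ico 0 (Real.pi / 2)) := by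
        apply Real.continuousOn_tan.mono
        intro y hy
        simp only [Set.mem_setOf_eq]
        exact ne_of_gt (Real.cos_pos_of_mem_Ioo ⟨by linarith [hy.1, Real.pi_pos], hy.2⟩)
      exact (continuousOn_id.add ((hcont.pow 3).div_const 3)).sub hcont
    · intro y hy
      rw [interior_Ico] at hy
      have hc : Real.cos y ≠ 0 :=
        ne_of_gt (Real.cos_pos_of_mem_Ioo ⟨by linarith [hy.1], hy.2⟩)
      have htan : HasDerivAt Real.tan (1 / Real.cos y ^ 2) y := Real.hasDerivAt_tan hc
      have hder : HasDerivAt f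
          (1 + (3 * Real.tan y ^ 2 * (1 / Real.cos y ^ 2)) / 3 - 1 / Real.cos y ^ 2) y := by
        have h := ((hasDerivAt_id y).add (((htan.pow 3).div_const 3))).sub htan
        simp at h ⊢
        exact h
      rw [hder.deriv]
      have hs : 1 / Real.cos y ^ 2 = 1 + Real.tan y ^ 2 := by
        rw [Real.tan_eq_sin_div_cos, div_pow]
        field_simp
        linarith [Real.sin_sq_add_cos_sq y]
      have htpos : 0 < Real.tan y := Real.tan_pos_of_pos_of_lt_pi_div_two hy.1 hy.2
      rw [hs]
      nlinarith [pow_pos htpos 4]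
  have h0 : f 0 = 0 := by simp [hf]
  have := key (Set.mem_Ico.mpr ⟨le_refl 0, by linarith [Real.pi_pos]⟩)
    (Set.mem_Ico.mpr ⟨le_of_lt hx, hx2⟩) hx
  rw [h0] at this
  simp only [hf] at this
  linarith
end

section
/- For every x in (0, π/2), we have x² tan x < 3(tan x − x). -/
theorem main_a (x : ℝ) (hx : 0 < x) (hx2 : x < Real.pi / 2) :
    x ^ 2 * Real.tan x < 3 * (Real.tan x - x) := by
  have hpi := Real.pi_pos
  set S := Set.Icc (0:ℝ) (Real.pi/2) with hS
  have h2 : StrictMonoOn (fun y => Real.sin y - y * Real.cos y) S := by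
    apply strictMonoOn_of_deriv_pos (convex_Icc _ _)
    · exact (Real.continuous_sin.sub (continuous_id.mul Real.continuous_cos)).continuousOn
    · intro y hy
      rw [interior_Icc] at hy
      have hd : HasDerivAt (fun y => Real.sin y - y * Real.cos y) (y * Real.sin y) y := by
        have := (Real.hasDerivAt_sin y).sub ((hasDerivAt_id y).mul (Real.hasDerivAt_cos y))
        refine this.congr_deriv ?_
        simp only [id_eq]; ring
      rw [hd.deriv]
      exact mul_pos hy.1 (Real.sin_pos_of_pos_of_lt_pi hy.1 (by linarith [hy.2]))
  have h3 : StrictMonoOn (fun y => (3 - y^2) * Real.sin y - 3*y*Real.cos y) S := by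
    apply strictMonoOn_of_deriv_pos (convex_Icc _ _)
    · exact (((continuous_const.sub (continuous_pow 2)).mul Real.continuous_sin).sub
        ((continuous_const.mul continuous_id).mul Real.continuous_cos)).continuousOn
    · intro y hy
      rw [interior_Icc] at hy
      have hd : HasDerivAt (fun y => (3 - y^2) * Real.sin y - 3*y*Real.cos y)
          (y * (Real.sin y - y * Real.cos y)) y := by
        have h1 : HasDerivAt (fun y : ℝ => (3 - y^2)) (-(2*y)) y := by
          have := (hasDerivAt_pow 2 y).const_sub 3
          refine this.congr_deriv ?_
          simp
        have := (h1.mul (Real.hasDerivAt_sin y)).sub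
          (((hasDerivAt_id y).const_mul 3).mul (Real.hasDerivAt_cos y))
        refine this.congr_deriv ?_
        simp only [id_eq]; ring
      rw [hd.deriv]
      have hs : (0:ℝ) < Real.sin y - y * Real.cos y := by
        have := h2 (Set.left_mem_Icc.2 (by linarith)) ⟨hy.1.le, hy.2.le⟩ hy.1
        simpa using this
      exact mul_pos hy.1 hs
  have hF : (0:ℝ) < (3 - x^2) * Real.sin x - 3*x*Real.cos x := by
    have := h3 (Set.left_mem_Icc.2 (by linarith)) ⟨hx.le, hx2.le⟩ hx
    simpa using this
  have hc : 0 < Real.cos x := Real.cos_pos_of_mem_Ioo ⟨by linarith, hx2⟩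
  rw [Real.tan_eq_sin_div_cos]
  rw [div_sub' hc.ne', ← mul_div_assoc, ← mul_div_assoc, div_lt_div_iff₀ hc hc]
  nlinarith [hF, hc, Real.sin_pos_of_pos_of_lt_pi hx (by linarith)]
end

section
/- For every x in (0, π/2), we have 3(tan x − x) < x^(9/5) · (tan x)^(6/5). -/
open Real Set

lemma aux_nonneg {f f' : ℝ → ℝ} (hd : ∀ t, HasDerivAt f (f' t) t) (h0 : 0 ≤ f 0)
    (hf' : ∀ t, 0 ≤ t → 0 ≤ f' t) {x : ℝ} (hx : 0 ≤ x) : 0 ≤ f x := by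
  have hmono : MonotoneOn f (Set.Ici 0) :=
    monotoneOn_of_hasDerivWithinAt_nonneg (convex_Ici 0)
      (fun t _ => (hd t).continuousAt.continuousWithinAt)
      (fun t ht => (hd t).hasDerivWithinAt)
      (fun t ht => hf' t (le_of_lt (by simpa [interior_Ici] using ht)))
  exact h0.trans (hmono Set.self_mem_Ici (Set.mem_Ici.mpr hx) hx)

lemma s1 {x : ℝ} (hx : 0 ≤ x) : Real.sin x ≤ x := by
  have h : 0 ≤ x - Real.sin x :=
    aux_nonneg (f := fun t => t - Real.sin t) (f' := fun t => 1 - Real.cos t)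
      (fun t => (hasDerivAt_id t).sub (Real.hasDerivAt_sin t))
      (by norm_num)
      (fun t _ => show (0:ℝ) ≤ 1 - Real.cos t by nlinarith [Real.cos_le_one t]) hx
  linarith

lemma c2 {x : ℝ} (hx : 0 ≤ x) : 1 - x^2/2 ≤ Real.cos x := by
  have h : 0 ≤ Real.cos x - 1 + x^2/2 :=
    aux_nonneg (f := fun t => Real.cos t - 1 + t^2/2) (f' := fun t => t - Real.sin t)
      (fun t => by
        have h := ((Real.hasDerivAt_cos t).sub_const 1).add ((hasDerivAt_pow 2 t).div_const 2)
        exact h.congr_deriv (by push_cast; ring))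
      (by norm_num)
      (fun t ht => show (0:ℝ) ≤ t - Real.sin t by linarith [s1 ht]) hx
  linarith

lemma s3 {x : ℝ} (hx : 0 ≤ x) : x - x^3/6 ≤ Real.sin x := by
  have h : 0 ≤ Real.sin x - x + x^3/6 :=
    aux_nonneg (f := fun t => Real.sin t - t + t^3/6) (f' := fun t => Real.cos t - 1 + t^2/2)
      (fun t => by
        have h := ((Real.hasDerivAt_sin t).sub (hasDerivAt_id t)).add ((hasDerivAt_pow 3 t).div_const 6)
        exact h.congr_deriv (by push_cast; ring))
      (by norm_num)
      (fun t ht => show (0:ℝ) ≤ Real.cos t - 1 + t^2/2 by linarith [c2 ht]) hx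
  linarith

lemma c4 {x : ℝ} (hx : 0 ≤ x) : Real.cos x ≤ 1 - x^2/2 + x^4/24 := by
  have h : 0 ≤ 1 - x^2/2 + x^4/24 - Real.cos x :=
    aux_nonneg (f := fun t => 1 - t^2/2 + t^4/24 - Real.cos t)
      (f' := fun t => Real.sin t - t + t^3/6)
      (fun t => by
        have h := (((hasDerivAt_pow 2 t).div_const 2).const_sub 1).add
          ((hasDerivAt_pow 4 t).div_const 24) |>.sub (Real.hasDerivAt_cos t)
        exact h.congr_deriv (by push_cast; ring))
      (by norm_num)
      (fun t ht => show (0:ℝ) ≤ Real.sin t - t + t^3/6 by linarith [s3 ht]) hx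
  linarith

lemma s5 {x : ℝ} (hx : 0 ≤ x) : Real.sin x ≤ x - x^3/6 + x^5/120 := by
  have h : 0 ≤ x - x^3/6 + x^5/120 - Real.sin x :=
    aux_nonneg (f := fun t => t - t^3/6 + t^5/120 - Real.sin t)
      (f' := fun t => 1 - t^2/2 + t^4/24 - Real.cos t)
      (fun t => by
        have h := ((hasDerivAt_id t).sub ((hasDerivAt_pow 3 t).div_const 6)).add
          ((hasDerivAt_pow 5 t).div_const 120) |>.sub (Real.hasDerivAt_sin t)
        exact h.congr_deriv (by push_cast; ring))
      (by norm_num)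
      (fun t ht => show (0:ℝ) ≤ 1 - t^2/2 + t^4/24 - Real.cos t by linarith [c4 ht]) hx
  linarith

lemma c6 {x : ℝ} (hx : 0 ≤ x) : 1 - x^2/2 + x^4/24 - x^6/720 ≤ Real.cos x := by
  have h : 0 ≤ Real.cos x - 1 + x^2/2 - x^4/24 + x^6/720 :=
    aux_nonneg (f := fun t => Real.cos t - 1 + t^2/2 - t^4/24 + t^6/720)
      (f' := fun t => t - t^3/6 + t^5/120 - Real.sin t)
      (fun t => by
        have h := (((Real.hasDerivAt_cos t).sub_const 1).add ((hasDerivAt_pow 2 t).div_const 2)).sub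
          ((hasDerivAt_pow 4 t).div_const 24) |>.add ((hasDerivAt_pow 6 t).div_const 720)
        exact h.congr_deriv (by push_cast; ring))
      (by norm_num)
      (fun t ht => show (0:ℝ) ≤ t - t^3/6 + t^5/120 - Real.sin t by linarith [s5 ht]) hx
  linarith

lemma s7 {x : ℝ} (hx : 0 ≤ x) : x - x^3/6 + x^5/120 - x^7/5040 ≤ Real.sin x := by
  have h : 0 ≤ Real.sin x - x + x^3/6 - x^5/120 + x^7/5040 :=
    aux_nonneg (f := fun t => Real.sin t - t + t^3/6 - t^5/120 + t^7/5040)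
      (f' := fun t => Real.cos t - 1 + t^2/2 - t^4/24 + t^6/720)
      (fun t => by
        have h := (((Real.hasDerivAt_sin t).sub (hasDerivAt_id t)).add
          ((hasDerivAt_pow 3 t).div_const 6)).sub ((hasDerivAt_pow 5 t).div_const 120) |>.add
          ((hasDerivAt_pow 7 t).div_const 5040)
        exact h.congr_deriv (by push_cast; ring))
      (by norm_num)
      (fun t ht => show (0:ℝ) ≤ Real.cos t - 1 + t^2/2 - t^4/24 + t^6/720 by linarith [c6 ht]) hx
  linarith

lemma c8 {x : ℝ} (hx : 0 ≤ x) : Real.cos x ≤ 1 - x^2/2 + x^4/24 - x^6/720 + x^8/40320 := by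
  have h : 0 ≤ 1 - x^2/2 + x^4/24 - x^6/720 + x^8/40320 - Real.cos x :=
    aux_nonneg (f := fun t => 1 - t^2/2 + t^4/24 - t^6/720 + t^8/40320 - Real.cos t)
      (f' := fun t => Real.sin t - t + t^3/6 - t^5/120 + t^7/5040)
      (fun t => by
        have h := ((((hasDerivAt_pow 2 t).div_const 2).const_sub 1).add
          ((hasDerivAt_pow 4 t).div_const 24)).sub ((hasDerivAt_pow 6 t).div_const 720) |>.add
          ((hasDerivAt_pow 8 t).div_const 40320) |>.sub (Real.hasDerivAt_cos t)
        exact h.congr_deriv (by push_cast; ring))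
      (by norm_num)
      (fun t ht => show (0:ℝ) ≤ Real.sin t - t + t^3/6 - t^5/120 + t^7/5040 by
        linarith [s7 ht]) hx
  linarith

lemma s9 {x : ℝ} (hx : 0 ≤ x) :
    Real.sin x ≤ x - x^3/6 + x^5/120 - x^7/5040 + x^9/362880 := by
  have h : 0 ≤ x - x^3/6 + x^5/120 - x^7/5040 + x^9/362880 - Real.sin x :=
    aux_nonneg (f := fun t => t - t^3/6 + t^5/120 - t^7/5040 + t^9/362880 - Real.sin t)
      (f' := fun t => 1 - t^2/2 + t^4/24 - t^6/720 + t^8/40320 - Real.cos t)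
      (fun t => by
        have h := (((hasDerivAt_id t).sub ((hasDerivAt_pow 3 t).div_const 6)).add
          ((hasDerivAt_pow 5 t).div_const 120)).sub ((hasDerivAt_pow 7 t).div_const 5040) |>.add
          ((hasDerivAt_pow 9 t).div_const 362880) |>.sub (Real.hasDerivAt_sin t)
        exact h.congr_deriv (by push_cast; ring))
      (by norm_num)
      (fun t ht => show (0:ℝ) ≤ 1 - t^2/2 + t^4/24 - t^6/720 + t^8/40320 - Real.cos t by
        linarith [c8 ht]) hx
  linarith
lemma qkey {y : ℝ} (hy : 0 < y) (hyB : y < 617/250) :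
    0 < (2:ℝ)/35 * y^0 + (-(2593:ℝ)/67200) * y^1 + (522967:ℝ)/42336000 * y^2 + (-(31634467:ℝ)/12700800000) * y^3 + (755671363:ℝ)/2133734400000 * y^4 + (-(120571601:ℝ)/3200601600000) * y^5 + (83452661:ℝ)/26885053440000 * y^6 + (-(6271075471:ℝ)/30971581562880000) * y^7 + (22977659671:ℝ)/2168010709401600000 * y^8 + (-(11668920929:ℝ)/26016128512819200000) * y^9 + (82281139651:ℝ)/5351889294065664000000 * y^10 + (-(5302390757:ℝ)/12487741686153216000000) * y^11 + (52284853:ℝ)/5619483758768947200000 * y^12 + (-(4061012401:ℝ)/25894581160407308697600000) * y^13 + (99532621:ℝ)/51789162320814617395200000 * y^14 + (-(6825107:ℝ)/443907105606982434816000000) * y^15 + (1:ℝ)/16390160963076096000000 * y^16 := by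
  have hB : 0 < 617/250 - y := by linarith
  nlinarith [
    mul_pos (pow_pos hy 0) (pow_pos hB 16), mul_pos (pow_pos hy 1) (pow_pos hB 15), mul_pos (pow_pos hy 2) (pow_pos hB 14), mul_pos (pow_pos hy 3) (pow_pos hB 13), mul_pos (pow_pos hy 4) (pow_pos hB 12), mul_pos (pow_pos hy 5) (pow_pos hB 11), mul_pos (pow_pos hy 6) (pow_pos hB 10), mul_pos (pow_pos hy 7) (pow_pos hB 9), mul_pos (pow_pos hy 8) (pow_pos hB 8), mul_pos (pow_pos hy 9) (pow_pos hB 7), mul_pos (pow_pos hy 10) (pow_pos hB 6), mul_pos (pow_pos hy 11) (pow_pos hB 5), mul_pos (pow_pos hy 12) (pow_pos hB 4), mul_pos (pow_pos hy 13) (pow_pos hB 3), mul_pos (pow_pos hy 14) (pow_pos hB 2), mul_pos (pow_pos hy 15) (pow_pos hB 1), mul_pos (pow_pos hy 16) (pow_pos hB 0)]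

lemma Qpos {x : ℝ} (hx : 0 < x) (hB : x^2 < 617/250) :
    243*(x^3/3 - x^5/30 + x^7/840 + x^9/362880)^5*(1 - x^2/2 + x^4/24)
      < x^9*(x - x^3/6 + x^5/120 - x^7/5040)^6 := by
  have h := qkey (y := x^2) (by positivity) hB
  have h19 : (0:ℝ) < x^19 := by positivity
  nlinarith [mul_pos h19 h]

lemma key_poly {x : ℝ} (hx : 0 < x) (hx2 : x < Real.pi / 2) :
    243*(Real.sin x - x*Real.cos x)^5 * Real.cos x < x^9 * Real.sin x^6 := by
  have hxle : (0:ℝ) ≤ x := hx.le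
  have hpi : Real.pi < 3.141593 := Real.pi_lt_d6
  have hB : x^2 < 617/250 := by nlinarith
  have hc : 0 < Real.cos x := Real.cos_pos_of_mem_Ioo ⟨by linarith [Real.pi_pos], hx2⟩
  have htan : x < Real.tan x := Real.lt_tan hx hx2
  have hsc : 0 < Real.sin x - x * Real.cos x := by
    have := htan
    rw [Real.tan_eq_sin_div_cos, lt_div_iff₀ hc] at this
    linarith
  -- Taylor bounds
  have hsL : x - x^3/6 + x^5/120 - x^7/5040 ≤ Real.sin x := s7 hxle
  have hsU : Real.sin x ≤ x - x^3/6 + x^5/120 - x^7/5040 + x^9/362880 := s9 hxle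
  have hcL : 1 - x^2/2 + x^4/24 - x^6/720 ≤ Real.cos x := c6 hxle
  have hcU : Real.cos x ≤ 1 - x^2/2 + x^4/24 := c4 hxle
  -- lower bound for RHS
  have hLpos : 0 ≤ x - x^3/6 + x^5/120 - x^7/5040 := by nlinarith
  have hR : x^9*(x - x^3/6 + x^5/120 - x^7/5040)^6 ≤ x^9 * Real.sin x^6 := by
    have := pow_le_pow_left₀ hLpos hsL 6
    exact mul_le_mul_of_nonneg_left this (by positivity)
  -- upper bound for LHS
  have hU : Real.sin x - x*Real.cos x ≤ x^3/3 - x^5/30 + x^7/840 + x^9/362880 := by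
    nlinarith [mul_le_mul_of_nonneg_left hcL hxle]
  have hL5 : (Real.sin x - x*Real.cos x)^5 ≤ (x^3/3 - x^5/30 + x^7/840 + x^9/362880)^5 :=
    pow_le_pow_left₀ hsc.le hU 5
  have hLhs : 243*(Real.sin x - x*Real.cos x)^5 * Real.cos x
      ≤ 243*(x^3/3 - x^5/30 + x^7/840 + x^9/362880)^5*(1 - x^2/2 + x^4/24) := by
    have hU5 : (0:ℝ) ≤ (x^3/3 - x^5/30 + x^7/840 + x^9/362880)^5 :=
      le_trans (pow_nonneg hsc.le 5) hL5
    calc 243*(Real.sin x - x*Real.cos x)^5 * Real.cos x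
        ≤ 243*(x^3/3 - x^5/30 + x^7/840 + x^9/362880)^5 * Real.cos x := by
          apply mul_le_mul_of_nonneg_right _ hc.le
          linarith
      _ ≤ 243*(x^3/3 - x^5/30 + x^7/840 + x^9/362880)^5*(1 - x^2/2 + x^4/24) := by
          apply mul_le_mul_of_nonneg_left hcU
          linarith
  calc 243*(Real.sin x - x*Real.cos x)^5 * Real.cos x
      ≤ 243*(x^3/3 - x^5/30 + x^7/840 + x^9/362880)^5*(1 - x^2/2 + x^4/24) := hLhs
    _ < x^9*(x - x^3/6 + x^5/120 - x^7/5040)^6 := Qpos hx hB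
    _ ≤ x^9 * Real.sin x^6 := hR

lemma key_tan {x : ℝ} (hx : 0 < x) (hx2 : x < Real.pi / 2) :
    243*(Real.tan x - x)^5 < x^9 * Real.tan x^6 := by
  have hc : 0 < Real.cos x := Real.cos_pos_of_mem_Ioo ⟨by linarith [Real.pi_pos], hx2⟩
  have hc6 : (0:ℝ) < Real.cos x^6 := by positivity
  have e : x^9 * Real.tan x^6 - 243*(Real.tan x - x)^5
      = (x^9 * Real.sin x^6 - 243*(Real.sin x - x*Real.cos x)^5 * Real.cos x)/Real.cos x^6 := by
    rw [Real.tan_eq_sin_div_cos]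
    field_simp
  have := div_pos (sub_pos.mpr (key_poly hx hx2)) hc6
  linarith [e ▸ this]

theorem main_b (x : ℝ) (hx : 0 < x) (hx2 : x < Real.pi / 2) :
    3 * (Real.tan x - x) < x ^ ((9 : ℝ) / 5) * Real.tan x ^ ((6 : ℝ) / 5) := by
  have htan : x < Real.tan x := Real.lt_tan hx hx2
  have ht0 : 0 < Real.tan x := lt_trans hx htan
  have hu : (0:ℝ) < 3 * (Real.tan x - x) := by linarith
  have hv : (0:ℝ) ≤ x ^ ((9 : ℝ) / 5) * Real.tan x ^ ((6 : ℝ) / 5) := by positivity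
  have e1 : (x ^ ((9:ℝ)/5)) ^ (5:ℕ) = x ^ (9:ℕ) := by
    rw [← Real.rpow_natCast (x ^ ((9:ℝ)/5)) 5, ← Real.rpow_mul hx.le,
      show ((9:ℝ)/5 * ((5:ℕ):ℝ)) = ((9:ℕ):ℝ) by norm_num, Real.rpow_natCast]
  have e2 : (Real.tan x ^ ((6:ℝ)/5)) ^ (5:ℕ) = Real.tan x ^ (6:ℕ) := by
    rw [← Real.rpow_natCast (Real.tan x ^ ((6:ℝ)/5)) 5, ← Real.rpow_mul ht0.le,
      show ((6:ℝ)/5 * ((5:ℕ):ℝ)) = ((6:ℕ):ℝ) by norm_num, Real.rpow_natCast]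
  have h5 : (3 * (Real.tan x - x)) ^ (5:ℕ)
      < (x ^ ((9 : ℝ) / 5) * Real.tan x ^ ((6 : ℝ) / 5)) ^ (5:ℕ) := by
    calc (3 * (Real.tan x - x)) ^ (5:ℕ) = 243*(Real.tan x - x)^5 := by ring
      _ < x^9 * Real.tan x^6 := key_tan hx hx2
      _ = (x ^ ((9:ℝ)/5)) ^ (5:ℕ) * (Real.tan x ^ ((6:ℝ)/5)) ^ (5:ℕ) := by rw [e1, e2]
      _ = (x ^ ((9 : ℝ) / 5) * Real.tan x ^ ((6 : ℝ) / 5)) ^ (5:ℕ) := (mul_pow _ _ 5).symm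
  exact lt_of_pow_lt_pow_left₀ 5 hv h5
end

section
/- For every x in (0, π/2), tan x < x + (1/3) x^(9/5) (tan x)^(6/5). -/
open Real Set

lemma aux1 (x : ℝ) (hx : 0 < x) (hx2 : x < π / 2) :
    x * Real.sin x + 2 * Real.cos x < 2 := by
  have hmono : StrictMonoOn (fun y : ℝ => 2 - 2 * Real.cos y - y * Real.sin y)
      (Icc 0 (π / 2)) := by
    apply strictMonoOn_of_deriv_pos (convex_Icc _ _)
    · fun_prop
    · intro y hy
      rw [interior_Icc] at hy
      obtain ⟨hy1, hy2⟩ := hy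
      have hc : 0 < Real.cos y := Real.cos_pos_of_mem_Ioo ⟨by linarith [Real.pi_pos], hy2⟩
      have hD : HasDerivAt (fun y : ℝ => 2 - 2 * Real.cos y - y * Real.sin y)
          (Real.sin y - y * Real.cos y) y := by
        have h1 := (Real.hasDerivAt_cos y).const_mul (2 : ℝ)
        have h2 := (hasDerivAt_id y).mul (Real.hasDerivAt_sin y)
        have h3 := ((hasDerivAt_const y (2:ℝ)).sub h1).sub h2
        simp only [id_eq] at h3
        exact h3.congr_deriv (by ring)
      rw [hD.deriv]
      have htan := Real.lt_tan hy1 hy2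
      rw [Real.tan_eq_sin_div_cos, lt_div_iff₀ hc] at htan
      linarith
  have h0 : (0:ℝ) ∈ Icc (0:ℝ) (π/2) := by constructor <;> [rfl; positivity]
  have hxm : x ∈ Icc (0:ℝ) (π/2) := ⟨hx.le, hx2.le⟩
  have := hmono h0 hxm hx
  simp at this
  linarith

lemma cusa (x : ℝ) (hx : 0 < x) (hx2 : x < π / 2) :
    3 * Real.sin x < x * (2 + Real.cos x) := by
  have hmono : StrictMonoOn (fun y : ℝ => y * (2 + Real.cos y) - 3 * Real.sin y)
      (Icc 0 (π / 2)) := by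
    apply strictMonoOn_of_deriv_pos (convex_Icc _ _)
    · fun_prop
    · intro y hy
      rw [interior_Icc] at hy
      obtain ⟨hy1, hy2⟩ := hy
      have hD : HasDerivAt (fun y : ℝ => y * (2 + Real.cos y) - 3 * Real.sin y)
          ((2 + Real.cos y) + y * (-Real.sin y) - 3 * Real.cos y) y := by
        have h1 := (hasDerivAt_id y).mul ((hasDerivAt_const y (2:ℝ)).add (Real.hasDerivAt_cos y))
        have h2 := (Real.hasDerivAt_sin y).const_mul (3:ℝ)
        have h3 := h1.sub h2
        simp only [id_eq] at h3
        exact h3.congr_deriv (by simp only [Pi.add_apply]; ring)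
      rw [hD.deriv]
      have := aux1 y hy1 hy2
      linarith
  have h0 : (0:ℝ) ∈ Icc (0:ℝ) (π/2) := by constructor <;> [rfl; positivity]
  have hxm : x ∈ Icc (0:ℝ) (π/2) := ⟨hx.le, hx2.le⟩
  have := hmono h0 hxm hx
  simp at this
  linarith

lemma key (x : ℝ) (hx : 0 < x) (hx2 : x < π / 2) :
    100000 * Real.sin x ^ 9 * Real.cos x
      < x ^ 4 * (4 * x + 6 * (Real.sin x * Real.cos x)) ^ 5 := by
  set s := Real.sin x with hs'
  set c := Real.cos x with hc'
  have hs : 0 < s := Real.sin_pos_of_pos_of_lt_pi hx (by linarith [Real.pi_pos])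
  have hc : 0 < c := Real.cos_pos_of_mem_Ioo ⟨by linarith [Real.pi_pos], hx2⟩
  have hcusa := cusa x hx hx2
  have h2c : (0:ℝ) < 2 + c := by linarith
  set a : ℝ := 3 * s / (2 + c) with ha'
  have ha : 0 < a := by positivity
  have hax : a < x := by
    rw [ha', div_lt_iff₀ h2c]
    linarith
  have step1 : a ^ 4 * (4 * a + 6 * (s * c)) ^ 5 * (2 + c) ^ 9
      = s ^ 9 * (629856 * ((1 + c) ^ 2 + 1) ^ 5) := by
    rw [ha']
    field_simp
    ring
  have hQ : 0 ≤ (1 - c) ^ 2 * (20155392 + 89887744*c + 181162496*c^2 + 214745088*c^3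
      + 164224000*c^4 + 83377664*c^5 + 27679488*c^6 + 5558272*c^7 + 529856*c^8) := by
    positivity
  have step2 : 100000 * c * (2 + c) ^ 9 ≤ 629856 * ((1 + c) ^ 2 + 1) ^ 5 := by
    nlinarith [hQ]
  have step3 : 100000 * s ^ 9 * c * (2 + c) ^ 9
      ≤ a ^ 4 * (4 * a + 6 * (s * c)) ^ 5 * (2 + c) ^ 9 := by
    rw [step1]
    have := mul_le_mul_of_nonneg_left step2 (pow_nonneg hs.le 9)
    nlinarith [this]
  have step4 : 100000 * s ^ 9 * c ≤ a ^ 4 * (4 * a + 6 * (s * c)) ^ 5 :=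
    le_of_mul_le_mul_right step3 (by positivity)
  have step5 : a ^ 4 * (4 * a + 6 * (s * c)) ^ 5 < x ^ 4 * (4 * x + 6 * (s * c)) ^ 5 := by
    have h1 : a ^ 4 < x ^ 4 := pow_lt_pow_left₀ hax ha.le (by norm_num)
    have h2 : (4 * a + 6 * (s * c)) ^ 5 < (4 * x + 6 * (s * c)) ^ 5 :=
      pow_lt_pow_left₀ (by linarith) (by positivity) (by norm_num)
    exact mul_lt_mul'' h1 h2 (by positivity) (by positivity)
  linarith

lemma tan_ineq (x : ℝ) (hx : 0 < x) (hx2 : x < π / 2) :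
    5 * Real.tan x ^ 2 < 3 * (x ^ ((4:ℝ)/5) * Real.tan x ^ ((6:ℝ)/5))
      + 2 * (x ^ ((9:ℝ)/5) * Real.tan x ^ ((1:ℝ)/5) * (1 + Real.tan x ^ 2)) := by
  set s := Real.sin x with hs'
  set c := Real.cos x with hc'
  have hs : 0 < s := Real.sin_pos_of_pos_of_lt_pi hx (by linarith [Real.pi_pos])
  have hc : 0 < c := Real.cos_pos_of_mem_Ioo ⟨by linarith [Real.pi_pos], hx2⟩
  set t := Real.tan x with ht'
  have htsc : t = s / c := Real.tan_eq_sin_div_cos x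
  have ht : 0 < t := Real.tan_pos_of_pos_of_lt_pi_div_two hx hx2
  have hsec : 1 + t ^ 2 = 1 / c ^ 2 := by
    rw [htsc]
    field_simp
    linarith [Real.sin_sq_add_cos_sq x]
  set r : ℝ := x / t with hr'
  have hrpos : 0 < r := by positivity
  have hrt : r = x * c / s := by
    rw [hr', htsc]
    field_simp
  have K := key x hx hx2
  set R : ℝ := r ^ ((4:ℝ)/5) with hR'
  have hRpos : 0 < R := Real.rpow_pos_of_pos hrpos _
  have hR5 : R ^ (5:ℕ) = r ^ (4:ℕ) := by
    rw [hR', ← Real.rpow_natCast (r ^ ((4:ℝ)/5)) 5, ← Real.rpow_mul hrpos.le]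
    norm_num
  have K' : 3125 * (2 * (s * c)) ^ 5 < r ^ 4 * (3 * (2 * (s * c)) + 2 * (2 * x)) ^ 5 := by
    have e1 : r ^ 4 * (3 * (2 * (s * c)) + 2 * (2 * x)) ^ 5
        = x ^ 4 * (4 * x + 6 * (s * c)) ^ 5 * (c ^ 4 / s ^ 4) := by
      rw [hrt]
      field_simp
      ring
    have e2 : 3125 * (2 * (s * c)) ^ 5 = 100000 * s ^ 9 * c * (c ^ 4 / s ^ 4) := by
      field_simp
      ring
    rw [e1, e2]
    exact mul_lt_mul_of_pos_right K (by positivity)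
  have hroot : 5 * (2 * (s * c)) < R * (3 * (2 * (s * c)) + 2 * (2 * x)) := by
    apply lt_of_pow_lt_pow_left₀ 5 (by positivity)
    calc (5 * (2 * (s * c))) ^ 5 = 3125 * (2 * (s * c)) ^ 5 := by ring
      _ < r ^ 4 * (3 * (2 * (s * c)) + 2 * (2 * x)) ^ 5 := K'
      _ = (R * (3 * (2 * (s * c)) + 2 * (2 * x))) ^ 5 := by rw [mul_pow, hR5]
  have key2 : 5 < 3 * R + 2 * (R * r) * (1 + t ^ 2) := by
    have hid : (3 * R + 2 * (R * r) * (1 + t ^ 2)) * (2 * (s * c))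
        = R * (3 * (2 * (s * c)) + 2 * (2 * x)) := by
      rw [hsec, hrt]
      field_simp
    have h := hroot
    rw [← hid] at h
    exact (mul_lt_mul_iff_of_pos_right (by positivity : (0:ℝ) < 2 * (s * c))).1 h
  -- now convert to rpow form
  have hRr : R * r = r ^ ((9:ℝ)/5) := by
    rw [hR']
    nth_rewrite 2 [← Real.rpow_one r]
    rw [← Real.rpow_add hrpos]
    norm_num
  have ht2 : t ^ (2:ℕ) = t ^ ((2:ℝ)) := by
    rw [← Real.rpow_natCast t 2]
    norm_num
  have h6 : R * t ^ 2 = x ^ ((4:ℝ)/5) * t ^ ((6:ℝ)/5) := by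
    rw [hR', hr', Real.div_rpow hx.le ht.le, ht2]
    rw [div_mul_eq_mul_div, mul_div_assoc]
    congr 1
    rw [← Real.rpow_sub ht]
    norm_num
  have h7 : (R * r) * t ^ 2 = x ^ ((9:ℝ)/5) * t ^ ((1:ℝ)/5) := by
    rw [hRr, hr', Real.div_rpow hx.le ht.le, ht2]
    rw [div_mul_eq_mul_div, mul_div_assoc]
    congr 1
    rw [← Real.rpow_sub ht]
    norm_num
  have hmul := mul_lt_mul_of_pos_right key2 (by positivity : (0:ℝ) < t ^ 2)
  calc 5 * t ^ 2 < (3 * R + 2 * (R * r) * (1 + t ^ 2)) * t ^ 2 := hmul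
    _ = 3 * (R * t ^ 2) + 2 * ((R * r) * t ^ 2) * (1 + t ^ 2) := by ring
    _ = 3 * (x ^ ((4:ℝ)/5) * t ^ ((6:ℝ)/5))
        + 2 * (x ^ ((9:ℝ)/5) * t ^ ((1:ℝ)/5) * (1 + t ^ 2)) := by rw [h6, h7]; ring

theorem main_b' (x : ℝ) (hx : 0 < x) (hx2 : x < Real.pi / 2) :
    Real.tan x < x + (1 / 3) * x ^ ((9 : ℝ) / 5) * Real.tan x ^ ((6 : ℝ) / 5) := by
  set F : ℝ → ℝ := fun y => y + (1 / 3) * y ^ ((9 : ℝ) / 5) * Real.tan y ^ ((6 : ℝ) / 5)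
      - Real.tan y with hF'
  have hmono : StrictMonoOn F (Icc 0 x) := by
    apply strictMonoOn_of_deriv_pos (convex_Icc _ _)
    · intro y hy
      obtain ⟨hy0, hyx⟩ := hy
      have hcy : 0 < Real.cos y := Real.cos_pos_of_mem_Ioo
        ⟨by linarith [Real.pi_pos], by linarith⟩
      have hct : ContinuousAt Real.tan y := Real.continuousAt_tan.2 hcy.ne'
      have h1 : ContinuousAt (fun z : ℝ => z ^ ((9:ℝ)/5)) y :=
        Real.continuousAt_rpow_const y _ (Or.inr (by norm_num))
      have h2 : ContinuousAt (fun z : ℝ => Real.tan z ^ ((6:ℝ)/5)) y :=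
        hct.rpow_const (Or.inr (by norm_num))
      exact (((continuousAt_id.add (((continuousAt_const.mul h1).mul h2))).sub hct)).continuousWithinAt
    · intro y hy
      rw [interior_Icc] at hy
      obtain ⟨hy0, hyx⟩ := hy
      have hy2 : y < π / 2 := by linarith
      have hcy : 0 < Real.cos y := Real.cos_pos_of_mem_Ioo
        ⟨by linarith [Real.pi_pos], hy2⟩
      have hty : 0 < Real.tan y := Real.tan_pos_of_pos_of_lt_pi_div_two hy0 hy2
      have hd1 : HasDerivAt (fun z : ℝ => z ^ ((9:ℝ)/5)) ((9/5) * y ^ ((9:ℝ)/5 - 1)) y :=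
        Real.hasDerivAt_rpow_const (Or.inr (by norm_num))
      have hd2 : HasDerivAt Real.tan (1 / Real.cos y ^ 2) y := Real.hasDerivAt_tan hcy.ne'
      have hd3 : HasDerivAt (fun z : ℝ => Real.tan z ^ ((6:ℝ)/5))
          ((1 / Real.cos y ^ 2) * (6/5) * Real.tan y ^ ((6:ℝ)/5 - 1)) y :=
        hd2.rpow_const (Or.inr (by norm_num))
      have hdF : HasDerivAt F
          (1 + ((1/3) * ((9/5) * y ^ ((9:ℝ)/5 - 1)) * Real.tan y ^ ((6:ℝ)/5)
            + (1/3) * y ^ ((9:ℝ)/5) * ((1 / Real.cos y ^ 2) * (6/5) * Real.tan y ^ ((6:ℝ)/5 - 1)))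
            - 1 / Real.cos y ^ 2) y := by
        have hA : HasDerivAt (fun z : ℝ => (1/3 : ℝ) * z ^ ((9:ℝ)/5) * Real.tan z ^ ((6:ℝ)/5))
            ((1/3) * ((9/5) * y ^ ((9:ℝ)/5 - 1)) * Real.tan y ^ ((6:ℝ)/5)
              + (1/3) * y ^ ((9:ℝ)/5) * ((1 / Real.cos y ^ 2) * (6/5) * Real.tan y ^ ((6:ℝ)/5 - 1))) y := by
          have := ((hd1.const_mul (1/3 : ℝ)).mul hd3)
          exact this
        exact ((hasDerivAt_id y).add hA).sub hd2
      rw [hdF.deriv]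
      have hsec : 1 / Real.cos y ^ 2 = 1 + Real.tan y ^ 2 := by
        rw [Real.tan_eq_sin_div_cos]
        field_simp
        try linarith [Real.sin_sq_add_cos_sq y]
      have hmain := tan_ineq y hy0 hy2
      have he1 : (9:ℝ)/5 - 1 = 4/5 := by norm_num
      have he2 : (6:ℝ)/5 - 1 = 1/5 := by norm_num
      rw [he1, he2, hsec]
      nlinarith [hmain]
  have h0m : (0:ℝ) ∈ Icc (0:ℝ) x := ⟨le_refl 0, hx.le⟩
  have hxm : x ∈ Icc (0:ℝ) x := ⟨hx.le, le_refl x⟩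
  have hlt := hmono h0m hxm hx
  have hF0 : F 0 = 0 := by
    rw [hF']
    simp [Real.tan_zero, Real.zero_rpow (by norm_num : ((9:ℝ)/5) ≠ 0)]
  rw [hF0] at hlt
  have : 0 < x + 1 / 3 * x ^ ((9:ℝ) / 5) * Real.tan x ^ ((6:ℝ) / 5) - Real.tan x := hlt
  linarith
end

section
/- For every x in (0, π/2), x + (1/3) x² tan x < tan x. -/
open Real Set

lemma aux_sin_sub (x : ℝ) (hx : 0 < x) (hx2 : x < Real.pi / 2) :
    x * Real.cos x < Real.sin x := by
  set p : ℝ → ℝ := fun y => Real.sin y - y * Real.cos y with hp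
  have hderiv : ∀ y : ℝ, HasDerivAt p (y * Real.sin y) y := by
    intro y
    have h1 := (Real.hasDerivAt_sin y).sub ((hasDerivAt_id' y).mul (Real.hasDerivAt_cos y))
    exact h1.congr_deriv (by ring)
  have hmono : StrictMonoOn p (Icc 0 (Real.pi / 2)) := by
    apply strictMonoOn_of_deriv_pos (convex_Icc _ _)
    · exact Continuous.continuousOn (by continuity)
    · intro y hy
      rw [interior_Icc] at hy
      rw [(hderiv y).deriv]
      exact mul_pos hy.1 (Real.sin_pos_of_pos_of_lt_pi hy.1
        (lt_trans hy.2 (by linarith [Real.pi_pos])))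
  have h0 : p 0 < p x := by
    apply hmono (left_mem_Icc.mpr (by positivity)) ⟨hx.le, hx2.le⟩ hx
  simp only [hp] at h0
  simp at h0
  linarith
lemma aux_h (x : ℝ) (hx : 0 < x) (hx2 : x < Real.pi / 2) :
    3 * x * Real.cos x + x ^ 2 * Real.sin x < 3 * Real.sin x := by
  set h : ℝ → ℝ := fun y => 3 * Real.sin y - y ^ 2 * Real.sin y - 3 * y * Real.cos y with hh
  have hderiv : ∀ y : ℝ, HasDerivAt h (y * (Real.sin y - y * Real.cos y)) y := by
    intro y
    have h1 := (((Real.hasDerivAt_sin y).const_mul 3).sub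
      ((hasDerivAt_pow 2 y).mul (Real.hasDerivAt_sin y))).sub
        (((hasDerivAt_id' y).const_mul 3).mul (Real.hasDerivAt_cos y))
    exact h1.congr_deriv (by push_cast; ring)
  have hmono : StrictMonoOn h (Icc 0 (Real.pi / 2)) := by
    apply strictMonoOn_of_deriv_pos (convex_Icc _ _)
    · exact Continuous.continuousOn (by continuity)
    · intro y hy
      rw [interior_Icc] at hy
      rw [(hderiv y).deriv]
      exact mul_pos hy.1 (by linarith [aux_sin_sub y hy.1 hy.2])
  have h0 : h 0 < h x := hmono (left_mem_Icc.mpr (by positivity)) ⟨hx.le, hx2.le⟩ hx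
  simp only [hh] at h0
  simp at h0
  linarith

theorem main_a' (x : ℝ) (hx : 0 < x) (hx2 : x < Real.pi / 2) :
    x + (1 / 3) * x ^ 2 * Real.tan x < Real.tan x := by
  have hc : 0 < Real.cos x := Real.cos_pos_of_mem_Ioo ⟨by linarith [Real.pi_pos], hx2⟩
  have key := aux_h x hx hx2
  rw [Real.tan_eq_sin_div_cos]
  have h2 : x + 1 / 3 * x ^ 2 * (Real.sin x / Real.cos x)
      = (3 * x * Real.cos x + x ^ 2 * Real.sin x) / (3 * Real.cos x) := by
    field_simp
  rw [h2]
  rw [div_lt_div_iff₀ (by positivity) hc]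
  nlinarith [hc]
end

section
/- The function φ(x) = (9 − 24x²) cos x − 9 cos(3x) − 4x sin(3x) satisfies φ(x) > 0 for every x with 0 < x ≤ √3. -/
open Real

private lemma nonneg_on (f f' : ℝ → ℝ) (hd : ∀ t, HasDerivAt f (f' t) t) (h0 : f 0 = 0)
    (hf' : ∀ t, 0 ≤ t → 0 ≤ f' t) : ∀ x : ℝ, 0 ≤ x → 0 ≤ f x := by
  intro x hx
  have hmono : MonotoneOn f (Set.Ici (0:ℝ)) :=
    monotoneOn_of_hasDerivWithinAt_nonneg (convex_Ici 0)
      (fun t _ => (hd t).continuousAt.continuousWithinAt)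
      (fun t _ => (hd t).hasDerivWithinAt)
      (fun t ht => hf' t (le_of_lt (by simpa [interior_Ici] using ht : (0:ℝ) < t)))
  have := hmono (Set.self_mem_Ici) (Set.mem_Ici.2 hx) hx
  linarith [h0 ▸ this]

private lemma b1 : ∀ x : ℝ, 0 ≤ x → Real.sin x ≤ x := by
  have h := nonneg_on (fun t => t - Real.sin t) (fun t => 1 - Real.cos t)
    (fun t => (hasDerivAt_id' (x := t)).sub (Real.hasDerivAt_sin t))
    (by norm_num)
    (fun t _ => show (0:ℝ) ≤ 1 - Real.cos t by linarith [Real.cos_le_one t])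
  intro x hx
  have h2 : 0 ≤ x - Real.sin x := h x hx
  linarith

private lemma b2 : ∀ x : ℝ, 0 ≤ x → 1 - x^2/2 ≤ Real.cos x := by
  have h := nonneg_on (fun t => Real.cos t - (1 - t^2/2)) (fun t => t - Real.sin t)
    (fun t => by
      have h1 := (Real.hasDerivAt_cos t).sub ((hasDerivAt_const t (1:ℝ)).sub ((hasDerivAt_pow 2 t).div_const 2))
      refine h1.congr_deriv ?_
      push_cast; ring)
    (by norm_num)
    (fun t ht => show (0:ℝ) ≤ t - Real.sin t by linarith [b1 t ht])
  intro x hx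
  have h2 : 0 ≤ Real.cos x - (1 - x^2/2) := h x hx
  linarith

private lemma b3 : ∀ x : ℝ, 0 ≤ x → x - x^3/6 ≤ Real.sin x := by
  have h := nonneg_on (fun t => Real.sin t - (t - t^3/6)) (fun t => Real.cos t - (1 - t^2/2))
    (fun t => by
      have h1 := (Real.hasDerivAt_sin t).sub ((hasDerivAt_id' (x := t)).sub ((hasDerivAt_pow 3 t).div_const 6))
      refine h1.congr_deriv ?_
      push_cast; ring)
    (by norm_num)
    (fun t ht => show (0:ℝ) ≤ Real.cos t - (1 - t^2/2) by linarith [b2 t ht])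
  intro x hx
  have h2 : 0 ≤ Real.sin x - (x - x^3/6) := h x hx
  linarith

private lemma b4 : ∀ x : ℝ, 0 ≤ x → Real.cos x ≤ 1 - x^2/2 + x^4/24 := by
  have h := nonneg_on (fun t => 1 - t^2/2 + t^4/24 - Real.cos t) (fun t => Real.sin t - (t - t^3/6))
    (fun t => by
      have h1 := (((hasDerivAt_const t (1:ℝ)).sub ((hasDerivAt_pow 2 t).div_const 2)).add ((hasDerivAt_pow 4 t).div_const 24)).sub (Real.hasDerivAt_cos t)
      refine h1.congr_deriv ?_
      push_cast; ring)
    (by norm_num)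
    (fun t ht => show (0:ℝ) ≤ Real.sin t - (t - t^3/6) by linarith [b3 t ht])
  intro x hx
  have h2 : 0 ≤ 1 - x^2/2 + x^4/24 - Real.cos x := h x hx
  linarith

private lemma b5 : ∀ x : ℝ, 0 ≤ x → Real.sin x ≤ x - x^3/6 + x^5/120 := by
  have h := nonneg_on (fun t => t - t^3/6 + t^5/120 - Real.sin t) (fun t => 1 - t^2/2 + t^4/24 - Real.cos t)
    (fun t => by
      have h1 := (((hasDerivAt_id' (x := t)).sub ((hasDerivAt_pow 3 t).div_const 6)).add ((hasDerivAt_pow 5 t).div_const 120)).sub (Real.hasDerivAt_sin t)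
      refine h1.congr_deriv ?_
      push_cast; ring)
    (by norm_num)
    (fun t ht => show (0:ℝ) ≤ 1 - t^2/2 + t^4/24 - Real.cos t by linarith [b4 t ht])
  intro x hx
  have h2 : 0 ≤ x - x^3/6 + x^5/120 - Real.sin x := h x hx
  linarith

private lemma b6 : ∀ x : ℝ, 0 ≤ x → 1 - x^2/2 + x^4/24 - x^6/720 ≤ Real.cos x := by
  have h := nonneg_on (fun t => Real.cos t - (1 - t^2/2 + t^4/24 - t^6/720))
    (fun t => t - t^3/6 + t^5/120 - Real.sin t)
    (fun t => by
      have h1 := (Real.hasDerivAt_cos t).sub ((((hasDerivAt_const t (1:ℝ)).sub ((hasDerivAt_pow 2 t).div_const 2)).add ((hasDerivAt_pow 4 t).div_const 24)).sub ((hasDerivAt_pow 6 t).div_const 720))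
      refine h1.congr_deriv ?_
      push_cast; ring)
    (by norm_num)
    (fun t ht => show (0:ℝ) ≤ t - t^3/6 + t^5/120 - Real.sin t by linarith [b5 t ht])
  intro x hx
  have h2 : 0 ≤ Real.cos x - (1 - x^2/2 + x^4/24 - x^6/720) := h x hx
  linarith

private lemma b7 : ∀ x : ℝ, 0 ≤ x → x - x^3/6 + x^5/120 - x^7/5040 ≤ Real.sin x := by
  have h := nonneg_on (fun t => Real.sin t - (t - t^3/6 + t^5/120 - t^7/5040))
    (fun t => Real.cos t - (1 - t^2/2 + t^4/24 - t^6/720))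
    (fun t => by
      have h1 := (Real.hasDerivAt_sin t).sub ((((hasDerivAt_id' (x := t)).sub ((hasDerivAt_pow 3 t).div_const 6)).add ((hasDerivAt_pow 5 t).div_const 120)).sub ((hasDerivAt_pow 7 t).div_const 5040))
      refine h1.congr_deriv ?_
      push_cast; ring)
    (by norm_num)
    (fun t ht => show (0:ℝ) ≤ Real.cos t - (1 - t^2/2 + t^4/24 - t^6/720) by linarith [b6 t ht])
  intro x hx
  have h2 : 0 ≤ Real.sin x - (x - x^3/6 + x^5/120 - x^7/5040) := h x hx
  linarith

private lemma b8 : ∀ x : ℝ, 0 ≤ x → Real.cos x ≤ 1 - x^2/2 + x^4/24 - x^6/720 + x^8/40320 := by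
  have h := nonneg_on (fun t => 1 - t^2/2 + t^4/24 - t^6/720 + t^8/40320 - Real.cos t)
    (fun t => Real.sin t - (t - t^3/6 + t^5/120 - t^7/5040))
    (fun t => by
      have h1 := (((((hasDerivAt_const t (1:ℝ)).sub ((hasDerivAt_pow 2 t).div_const 2)).add ((hasDerivAt_pow 4 t).div_const 24)).sub ((hasDerivAt_pow 6 t).div_const 720)).add ((hasDerivAt_pow 8 t).div_const 40320)).sub (Real.hasDerivAt_cos t)
      refine h1.congr_deriv ?_
      push_cast; ring)
    (by norm_num)
    (fun t ht => show (0:ℝ) ≤ Real.sin t - (t - t^3/6 + t^5/120 - t^7/5040) by linarith [b7 t ht])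
  intro x hx
  have h2 : 0 ≤ 1 - x^2/2 + x^4/24 - x^6/720 + x^8/40320 - Real.cos x := h x hx
  linarith

set_option maxHeartbeats 2000000 in
theorem phi_pos_sqrt3 (x : ℝ) (hx : 0 < x) (hx2 : x ≤ Real.sqrt 3) :
    0 < (9 - 24 * x ^ 2) * Real.cos x - 9 * Real.cos (3 * x) - 4 * x * Real.sin (3 * x) := by
  have hy : x^2 ≤ 3 := by
    have h3 : Real.sqrt 3 ^ 2 = 3 := Real.sq_sqrt (by norm_num)
    nlinarith [hx2, Real.sqrt_nonneg 3]
  rw [Real.cos_three_mul, Real.sin_three_mul]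
  set s := Real.sin x with hsdef
  set c := Real.cos x with hcdef
  have hpy : s^2 + c^2 = 1 := Real.sin_sq_add_cos_sq x
  -- Taylor bounds
  have hs_lb : x - x^3/6 + x^5/120 - x^7/5040 ≤ s := b7 x hx.le
  have hs_ub : s ≤ x - x^3/6 + x^5/120 := b5 x hx.le
  have hc_lb : 1 - x^2/2 + x^4/24 - x^6/720 ≤ c := b6 x hx.le
  have hc_ub : c ≤ 1 - x^2/2 + x^4/24 - x^6/720 + x^8/40320 := b8 x hx.le
  have h6 : x^6 ≤ 27 := by nlinarith [hy, sq_nonneg x, sq_nonneg (x^2)]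
  have hinner : 0 ≤ 1 - x^2/6 + x^4/120 - x^6/5040 := by
    nlinarith [h6, hy, pow_nonneg hx.le 4]
  have hps_nn : 0 ≤ x - x^3/6 + x^5/120 - x^7/5040 := by
    nlinarith [mul_nonneg hx.le hinner]
  have hs_nn : 0 ≤ s := le_trans hps_nn hs_lb
  have hpc_lb1 : (-1:ℝ) ≤ 1 - x^2/2 + x^4/24 - x^6/720 := by
    nlinarith [h6, hy, pow_nonneg hx.le 4]
  have hsx : s ≤ x := by
    have h53 : x^5 ≤ 3*x^3 := by nlinarith [pow_nonneg hx.le 3, hy]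
    nlinarith [hs_ub, h53, pow_nonneg hx.le 3]
  -- Term A : 36 s^2 c ≥ 36 ps^2 pc - x^8/70
  have e1 : 0 ≤ s^2*(c - (1 - x^2/2 + x^4/24 - x^6/720)) :=
    mul_nonneg (sq_nonneg s) (by linarith)
  have e2 : s^2 - (x - x^3/6 + x^5/120 - x^7/5040)^2 ≤ x^8/2520 := by
    nlinarith [mul_le_mul (show s - (x - x^3/6 + x^5/120 - x^7/5040) ≤ x^7/5040 by linarith)
      (show s + (x - x^3/6 + x^5/120 - x^7/5040) ≤ 2*x by linarith)
      (by linarith) (by positivity : (0:ℝ) ≤ x^7/5040)]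
  have e3 : 0 ≤ (s^2 - (x - x^3/6 + x^5/120 - x^7/5040)^2)*((1 - x^2/2 + x^4/24 - x^6/720)+1) := by
    apply mul_nonneg
    · nlinarith [hs_lb, hps_nn]
    · linarith
  have A : 36*(x - x^3/6 + x^5/120 - x^7/5040)^2*(1 - x^2/2 + x^4/24 - x^6/720) - x^8/70 ≤ 36*s^2*c := by
    linarith [e1, e2, e3]
  -- Term B
  have B : -(24*x^2*(1 - x^2/2 + x^4/24 - x^6/720 + x^8/40320)) ≤ -(24*x^2*c) := by
    nlinarith [mul_le_mul_of_nonneg_left hc_ub (show (0:ℝ) ≤ 24*x^2 by positivity)]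
  -- Term C
  have C : -(12*x*(x - x^3/6 + x^5/120)) ≤ -(12*x*s) := by
    nlinarith [mul_le_mul_of_nonneg_left hs_ub (show (0:ℝ) ≤ 12*x by positivity)]
  -- Term D
  have D : 16*x*(x - x^3/6 + x^5/120 - x^7/5040)^3 ≤ 16*x*s^3 := by
    have hcube : (x - x^3/6 + x^5/120 - x^7/5040)^3 ≤ s^3 := pow_le_pow_left₀ hps_nn hs_lb 3
    nlinarith [mul_le_mul_of_nonneg_left hcube (show (0:ℝ) ≤ 16*x by positivity)]
  -- Final polynomial inequality
  have final : 0 < 36*(x - x^3/6 + x^5/120 - x^7/5040)^2*(1 - x^2/2 + x^4/24 - x^6/720) - x^8/70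
      - 24*x^2*(1 - x^2/2 + x^4/24 - x^6/720 + x^8/40320) - 12*x*(x - x^3/6 + x^5/120)
      + 16*x*(x - x^3/6 + x^5/120 - x^7/5040)^3 := by
    have h8 : 0 < x^8 := by positivity
    have e10 : x^10 ≤ 3*x^8 := by nlinarith [mul_nonneg (sub_nonneg.2 hy) (pow_nonneg hx.le 8)]
    have e12 : x^12 ≤ 9*x^8 := by nlinarith [mul_nonneg (sub_nonneg.2 hy) (pow_nonneg hx.le 10), e10]
    have e14 : x^14 ≤ 27*x^8 := by nlinarith [mul_nonneg (sub_nonneg.2 hy) (pow_nonneg hx.le 12), e12]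
    have e16 : x^16 ≤ 81*x^8 := by nlinarith [mul_nonneg (sub_nonneg.2 hy) (pow_nonneg hx.le 14), e14]
    have e18 : x^18 ≤ 243*x^8 := by nlinarith [mul_nonneg (sub_nonneg.2 hy) (pow_nonneg hx.le 16), e16]
    have e20 : x^20 ≤ 729*x^8 := by nlinarith [mul_nonneg (sub_nonneg.2 hy) (pow_nonneg hx.le 18), e18]
    have e22 : x^22 ≤ 2187*x^8 := by nlinarith [mul_nonneg (sub_nonneg.2 hy) (pow_nonneg hx.le 20), e20]
    linarith [e10, e14, e18, e22, h8, pow_nonneg hx.le 12, pow_nonneg hx.le 16, pow_nonneg hx.le 20]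
  -- Assemble
  have goal_eq : (9 - 24 * x ^ 2) * c - 9 * (4 * c ^ 3 - 3 * c) - 4 * x * (3 * s - 4 * s ^ 3)
      = 36*s^2*c - 24*x^2*c - 12*x*s + 16*x*s^3 := by
    linear_combination (-36*c) * hpy
  rw [goal_eq]
  linarith [A, B, C, D, final]
end

section
/- For all n ≥ 4, (2n+2)(2n+1)·Tₙ − 3·Tₙ₊₁ > 0, where Tₙ = 2(4n−1)² + 1 + (8n−27)·9^(n−1). -/
theorem U_pos (n : ℕ) (hn : 4 ≤ n) :
    0 < (2 * (n : ℚ) + 2) * (2 * (n : ℚ) + 1) *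
        (2 * (4 * (n : ℚ) - 1) ^ 2 + 1 + (8 * (n : ℚ) - 27) * (9 : ℚ) ^ ((n : ℤ) - 1)) -
      3 * (2 * (4 * ((n : ℚ) + 1) - 1) ^ 2 + 1 + (8 * ((n : ℚ) + 1) - 27) * (9 : ℚ) ^ (n : ℤ)) := by
  have hn4 : (4 : ℚ) ≤ (n : ℚ) := by exact_mod_cast hn
  have h9 : (9 : ℚ) ^ (n : ℤ) = 9 * (9 : ℚ) ^ ((n : ℤ) - 1) := by
    rw [← zpow_one_add₀ (by norm_num : (9:ℚ) ≠ 0)]; ring_nf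
  have hx : (729 : ℚ) ≤ (9 : ℚ) ^ ((n : ℤ) - 1) := by
    calc (729 : ℚ) = (9 : ℚ) ^ (3 : ℤ) := by norm_num
    _ ≤ (9 : ℚ) ^ ((n : ℤ) - 1) := by
        apply zpow_le_zpow_right₀ (by norm_num : (1:ℚ) ≤ 9)
        omega
  rw [h9]
  nlinarith [hx, hn4, mul_le_mul_of_nonneg_left hx (by nlinarith : (0:ℚ) ≤ (n:ℚ) - 4),
    sq_nonneg ((n:ℚ) - 4)]
end

section
/- The function g(x) = 3 − x² − 3x·cot x is strictly monotonically increasing on (0, π/2). -/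
open Real Set

lemma aux1_s13 {t : ℝ} (ht : t ∈ Set.Ioo 0 Real.pi) : 0 < Real.sin t - t * Real.cos t := by
  obtain ⟨h0, hp⟩ := ht
  have hs : 0 < Real.sin t := Real.sin_pos_of_pos_of_lt_pi h0 hp
  rcases lt_or_ge t (Real.pi / 2) with h | h
  · have htan := Real.lt_tan h0 h
    have hc : 0 < Real.cos t := Real.cos_pos_of_mem_Ioo ⟨by linarith, h⟩
    rw [Real.tan_eq_sin_div_cos, lt_div_iff₀ hc] at htan
    linarith
  · have hc : Real.cos t ≤ 0 :=
      Real.cos_nonpos_of_pi_div_two_le_of_le h (by linarith [Real.pi_pos])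
    nlinarith

lemma aux2 {t : ℝ} (ht : t ∈ Set.Ioo 0 Real.pi) :
    0 < 2 - 2 * Real.cos t - t * Real.sin t := by
  have hmono : StrictMonoOn (fun t : ℝ => 2 - 2 * Real.cos t - t * Real.sin t)
      (Set.Icc 0 Real.pi) := by
    apply strictMonoOn_of_deriv_pos (convex_Icc 0 Real.pi)
    · fun_prop
    · intro x hx
      rw [interior_Icc] at hx
      have hd : HasDerivAt (fun t : ℝ => 2 - 2 * Real.cos t - t * Real.sin t)
          (Real.sin x - x * Real.cos x) x := by
        have h1 := ((Real.hasDerivAt_cos x).const_mul 2).const_sub 2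
        have h2 := (hasDerivAt_id x).fun_mul (Real.hasDerivAt_sin x)
        have := h1.fun_sub h2
        refine this.congr_deriv ?_
        simp [id]
        ring
      rw [hd.deriv]
      exact aux1_s13 hx
  have h0 : (fun t : ℝ => 2 - 2 * Real.cos t - t * Real.sin t) 0 = 0 := by simp
  have := hmono (by constructor <;> simp [Real.pi_pos.le]) ⟨ht.1.le, ht.2.le⟩ ht.1
  rw [h0] at this
  simpa using this

lemma aux3 {t : ℝ} (ht : t ∈ Set.Ioo 0 Real.pi) :
    0 < t * (2 + Real.cos t) - 3 * Real.sin t := by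
  have hmono : StrictMonoOn (fun t : ℝ => t * (2 + Real.cos t) - 3 * Real.sin t)
      (Set.Icc 0 Real.pi) := by
    apply strictMonoOn_of_deriv_pos (convex_Icc 0 Real.pi)
    · fun_prop
    · intro x hx
      rw [interior_Icc] at hx
      have hd : HasDerivAt (fun t : ℝ => t * (2 + Real.cos t) - 3 * Real.sin t)
          (2 - 2 * Real.cos x - x * Real.sin x) x := by
        have h1 := (hasDerivAt_id x).fun_mul ((Real.hasDerivAt_cos x).const_add 2)
        have h2 := (Real.hasDerivAt_sin x).const_mul 3
        have := h1.fun_sub h2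
        refine this.congr_deriv ?_
        simp [id]
        ring
      rw [hd.deriv]
      exact aux2 hx
  have := hmono (by constructor <;> simp [Real.pi_pos.le]) ⟨ht.1.le, ht.2.le⟩ ht.1
  simpa using this

theorem g_strictMono :
    StrictMonoOn (fun x : ℝ => 3 - x ^ 2 - 3 * x * (Real.cos x / Real.sin x))
      (Set.Ioo 0 (Real.pi / 2)) := by
  apply strictMonoOn_of_deriv_pos (convex_Ioo 0 (Real.pi / 2))
  · apply ContinuousOn.sub
    · fun_prop
    · apply ContinuousOn.mul (by fun_prop)
      apply ContinuousOn.div (by fun_prop) (by fun_prop)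
      intro x hx
      exact (Real.sin_pos_of_pos_of_lt_pi hx.1 (by linarith [hx.2, Real.pi_pos])).ne'
  · intro x hx
    rw [interior_Ioo] at hx
    have hs : 0 < Real.sin x :=
      Real.sin_pos_of_pos_of_lt_pi hx.1 (by linarith [hx.2, Real.pi_pos])
    have hd : HasDerivAt (fun x : ℝ => 3 - x ^ 2 - 3 * x * (Real.cos x / Real.sin x))
        (-(2 * x) - (3 * (Real.cos x / Real.sin x) +
          3 * x * ((-Real.sin x * Real.sin x - Real.cos x * Real.cos x) / Real.sin x ^ 2))) x := by
      have h1 : HasDerivAt (fun x : ℝ => 3 - x ^ 2) (-(2 * x)) x := by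
        simpa using (hasDerivAt_pow 2 x).const_sub 3
      have h2 := (Real.hasDerivAt_cos x).fun_div (Real.hasDerivAt_sin x) hs.ne'
      have h3 := ((hasDerivAt_id x).const_mul 3).fun_mul h2
      have := h1.fun_sub h3
      refine this.congr_deriv ?_
      simp [id]
    rw [hd.deriv]
    have key := aux3 (t := 2 * x) ⟨by linarith [hx.1], by linarith [hx.2]⟩
    rw [Real.cos_two_mul, Real.sin_two_mul] at key
    have hpy := Real.sin_sq_add_cos_sq x
    have h4 : x * Real.sin x ^ 2 + x * Real.cos x ^ 2 = x := by rw [← mul_add, hpy, mul_one]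
    have hnum : 0 < 3 * x - 3 * Real.sin x * Real.cos x - 2 * x * Real.sin x ^ 2 := by
      nlinarith
    have hneg : -Real.sin x * Real.sin x - Real.cos x * Real.cos x = -1 := by rw [← Real.sin_sq_add_cos_sq x]; ring
    rw [hneg]
    have heq : -(2 * x) - (3 * (Real.cos x / Real.sin x) +
        3 * x * (-1 / Real.sin x ^ 2)) =
        (3 * x - 3 * Real.sin x * Real.cos x - 2 * x * Real.sin x ^ 2) / Real.sin x ^ 2 := by
      field_simp
      ring
    rw [heq]
    positivity
end

section
/- The function h(x) = x − 3 tan x/(3 + tan²x) is positive on (0, π/2). -/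
open Real

lemma key_ineq (t : ℝ) (ht : 0 < t) : 3 * t / (3 + t ^ 2) < Real.arctan t := by
  set g : ℝ → ℝ := fun t => Real.arctan t - 3 * t / (3 + t ^ 2) with hg
  have hden : ∀ s : ℝ, (0:ℝ) < 3 + s ^ 2 := fun s => by positivity
  have hderiv : ∀ s : ℝ, HasDerivAt g (1 / (1 + s ^ 2) - (9 - 3 * s ^ 2) / (3 + s ^ 2) ^ 2) s := by
    intro s
    have h1 : HasDerivAt Real.arctan (1 / (1 + s ^ 2)) s := Real.hasDerivAt_arctan s
    have h2 : HasDerivAt (fun u : ℝ => 3 * u) 3 s := by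
      simpa using (hasDerivAt_id s).const_mul 3
    have h3 : HasDerivAt (fun u : ℝ => 3 + u ^ 2) (2 * s) s := by
      have := (hasDerivAt_pow 2 s).const_add 3
      simpa using this
    have h4 := h2.div h3 (ne_of_gt (hden s))
    have heq : (3 * (3 + s ^ 2) - 3 * s * (2 * s)) / (3 + s ^ 2) ^ 2
        = (9 - 3 * s ^ 2) / (3 + s ^ 2) ^ 2 := by ring_nf
    rw [heq] at h4
    exact h1.sub h4
  have hmono : StrictMonoOn g (Set.Ici 0) := by
    apply strictMonoOn_of_deriv_pos (convex_Ici 0)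
    · exact Continuous.continuousOn (by
        apply Real.continuous_arctan.sub
        exact (continuous_const.mul continuous_id).div
          (continuous_const.add (continuous_pow 2)) (fun s => ne_of_gt (hden s)))
    · intro s hs
      rw [interior_Ici] at hs
      rw [(hderiv s).deriv]
      have h1 : (0:ℝ) < 1 + s ^ 2 := by positivity
      rw [sub_pos, div_lt_div_iff₀ (by positivity) h1]
      nlinarith [pow_pos (Set.mem_Ioi.mp hs) 4]
  have h0 : g 0 = 0 := by simp [hg]
  have := hmono (Set.self_mem_Ici) (Set.mem_Ici.mpr ht.le) ht
  rw [h0] at this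
  simpa [hg, sub_pos] using this

theorem h_pos (x : ℝ) (hx : 0 < x) (hx2 : x < Real.pi / 2) :
    0 < x - 3 * Real.tan x / (3 + Real.tan x ^ 2) := by
  have hx1 : -(Real.pi / 2) < x := by
    have := Real.pi_pos; linarith
  have htan : 0 < Real.tan x := Real.tan_pos_of_pos_of_lt_pi_div_two hx hx2
  have harc : Real.arctan (Real.tan x) = x := Real.arctan_tan hx1 hx2
  have := key_ineq (Real.tan x) htan
  rw [harc] at this
  linarith
end

section
/- The limit as x approaches π/2 from the left of log(3(tan x − x)/x³)/log(tan x / x) equals 1. -/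
open Real Filter Set Topology

theorem phi_limit_pi_half :
    Filter.Tendsto
      (fun x : ℝ => Real.log (3 * (Real.tan x - x) / x ^ 3) / Real.log (Real.tan x / x))
      (nhdsWithin (Real.pi / 2) (Set.Iio (Real.pi / 2))) (nhds 1) := by
  set l := nhdsWithin (Real.pi / 2) (Set.Iio (Real.pi / 2)) with hl
  have hx : Tendsto (fun x : ℝ => x) l (𝓝 (π / 2)) := tendsto_id.mono_left nhdsWithin_le_nhds
  have htan : Tendsto Real.tan l atTop := Real.tendsto_tan_pi_div_two
  have hπ3 : (3:ℝ) < π := Real.pi_gt_three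
  have hπ4 : π < 3.15 := Real.pi_lt_d2
  -- eventual facts
  have hev : ∀ᶠ x in l, 1 < x ∧ x < π / 2 ∧ 2 < Real.tan x := by
    have h1 : ∀ᶠ x in l, 1 < x := hx.eventually (eventually_gt_nhds (by linarith))
    have h2 : ∀ᶠ x in l, x ∈ Set.Iio (π / 2) := self_mem_nhdsWithin
    have h3 : ∀ᶠ x in l, 2 < Real.tan x := htan.eventually_gt_atTop 2
    filter_upwards [h1, h2, h3] with x a b c
    exact ⟨a, b, c⟩
  -- denominator tends to atTop
  have hdivTop : Tendsto (fun x : ℝ => Real.tan x / x) l atTop := by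
    have hinv : Tendsto (fun x : ℝ => x⁻¹) l (𝓝 ((π / 2)⁻¹)) :=
      hx.inv₀ (by positivity)
    have := htan.atTop_mul_pos (by positivity) hinv
    simpa [div_eq_mul_inv] using this
  have hg : Tendsto (fun x : ℝ => Real.log (Real.tan x / x)) l atTop :=
    Real.tendsto_log_atTop.comp hdivTop
  -- ratio of arguments tends to 3/(π/2)^2
  have hr : Tendsto (fun x : ℝ => (3 / x ^ 2) * (1 - x * (Real.tan x)⁻¹)) l
      (𝓝 ((3 / (π / 2) ^ 2) * 1)) := by
    have ha : Tendsto (fun x : ℝ => 3 / x ^ 2) l (𝓝 (3 / (π / 2) ^ 2)) :=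
      tendsto_const_nhds.div (hx.pow 2) (by positivity)
    have hb : Tendsto (fun x : ℝ => 1 - x * (Real.tan x)⁻¹) l (𝓝 1) := by
      have : Tendsto (fun x : ℝ => x * (Real.tan x)⁻¹) l (𝓝 (π / 2 * 0)) :=
        hx.mul htan.inv_tendsto_atTop
      have h2 : Tendsto (fun x : ℝ => 1 - x * (Real.tan x)⁻¹) l (𝓝 (1 - π / 2 * 0)) :=
        tendsto_const_nhds.sub this
      simpa using h2
    exact ha.mul hb
  -- f - g tends to log (3/(π/2)^2)
  have hc : (0:ℝ) < 3 / (π / 2) ^ 2 := by positivity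
  have hfg : Tendsto (fun x : ℝ =>
      Real.log (3 * (Real.tan x - x) / x ^ 3) - Real.log (Real.tan x / x)) l
      (𝓝 (Real.log (3 / (π / 2) ^ 2))) := by
    have hlog : Tendsto (fun x : ℝ => Real.log ((3 / x ^ 2) * (1 - x * (Real.tan x)⁻¹))) l
        (𝓝 (Real.log (3 / (π / 2) ^ 2))) := by
      have := (Real.continuousAt_log (by positivity : (3 / (π / 2) ^ 2 * 1 : ℝ) ≠ 0)).tendsto.comp hr
      simpa [Function.comp_def] using this
    apply hlog.congr'
    filter_upwards [hev] with x ⟨h1, h2, h3⟩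
    have hx0 : x ≠ 0 := by linarith
    have htanx : (0:ℝ) < Real.tan x := by linarith
    have hAB : (3 / x ^ 2) * (1 - x * (Real.tan x)⁻¹)
        = (3 * (Real.tan x - x) / x ^ 3) / (Real.tan x / x) := by
      field_simp
    have hA0 : (0:ℝ) < 3 * (Real.tan x - x) / x ^ 3 := by
      have h4 : (0:ℝ) < Real.tan x - x := by linarith
      have hx0' : (0:ℝ) < x := by linarith
      positivity
    have hB0 : (0:ℝ) < Real.tan x / x := by
      have hx0' : (0:ℝ) < x := by linarith
      positivity
    rw [hAB, Real.log_div hA0.ne' hB0.ne']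
  -- conclude
  have h0 : Tendsto (fun x : ℝ =>
      (Real.log (3 * (Real.tan x - x) / x ^ 3) - Real.log (Real.tan x / x))
        / Real.log (Real.tan x / x)) l (𝓝 0) :=
    hfg.div_atTop hg
  have hfinal := h0.add (tendsto_const_nhds (x := (1:ℝ)) (f := l))
  rw [zero_add] at hfinal
  apply hfinal.congr'
  filter_upwards [hg.eventually_gt_atTop 0] with x hx1
  field_simp
  ring
end

section
/- The limit as x approaches 0 from the right of log(3(tan x − x)/x³)/log(tan x / x) equals 6/5. -/
open Real Set Filter

open Real Set Filter

lemma mono_aux {f f' : ℝ → ℝ} (hd : ∀ x, HasDerivAt f (f' x) x)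
    (h0 : f 0 = 0) (hf' : ∀ x, 0 ≤ x → 0 ≤ f' x) {x : ℝ} (hx : 0 ≤ x) : 0 ≤ f x := by
  have hmono : MonotoneOn f (Set.Ici 0) := by
    apply monotoneOn_of_deriv_nonneg (convex_Ici 0)
    · exact fun y _ => (hd y).differentiableAt.continuousAt.continuousWithinAt
    · exact fun y _ => (hd y).differentiableAt.differentiableWithinAt
    · intro y hy
      rw [interior_Ici] at hy
      rw [(hd y).deriv]
      exact hf' y hy.le
  calc (0:ℝ) = f 0 := h0.symm
  _ ≤ f x := hmono (Set.mem_Ici.mpr (le_refl (0:ℝ))) hx hx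

lemma sin_ge0 {x : ℝ} (hx : 0 ≤ x) : x - x^3/6 ≤ sin x := by
  have := mono_aux (f := fun x => Real.sin x - (x - x^3/6))
      (f' := fun x => Real.cos x - (1 - x^2/2)) (fun y => by
        have h := (Real.hasDerivAt_sin y).sub ((hasDerivAt_id y).sub ((hasDerivAt_pow 3 y).div_const 6))
        refine h.congr_deriv ?_
        simp; ring)
      (by norm_num) (fun y _ => by nlinarith [Real.one_sub_sq_div_two_le_cos (x := y)]) hx
  linarith

lemma cos_le4 {x : ℝ} (hx : 0 ≤ x) : cos x ≤ 1 - x^2/2 + x^4/24 := by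
  have := mono_aux (f := fun x => (1 - x^2/2 + x^4/24) - Real.cos x)
      (f' := fun x => (Real.sin x - (x - x^3/6))) (fun y => by
        have h := (((hasDerivAt_pow 2 y).div_const 2).neg.const_add 1 |>.add ((hasDerivAt_pow 4 y).div_const 24)).sub (Real.hasDerivAt_cos y)
        refine h.congr_deriv ?_
        simp; ring)
      (by norm_num) (fun y hy => by nlinarith [sin_ge0 hy]) hx
  linarith

lemma sin_le5 {x : ℝ} (hx : 0 ≤ x) : sin x ≤ x - x^3/6 + x^5/120 := by
  have := mono_aux (f := fun x => (x - x^3/6 + x^5/120) - Real.sin x)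
      (f' := fun x => (1 - x^2/2 + x^4/24) - Real.cos x) (fun y => by
        have h := (((hasDerivAt_id y).sub ((hasDerivAt_pow 3 y).div_const 6)).add ((hasDerivAt_pow 5 y).div_const 120)).sub (Real.hasDerivAt_sin y)
        refine h.congr_deriv ?_
        simp; ring)
      (by norm_num) (fun y hy => by nlinarith [cos_le4 hy]) hx
  linarith

lemma cos_ge6 {x : ℝ} (hx : 0 ≤ x) : 1 - x^2/2 + x^4/24 - x^6/720 ≤ cos x := by
  have := mono_aux (f := fun x => Real.cos x - (1 - x^2/2 + x^4/24 - x^6/720))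
      (f' := fun x => (x - x^3/6 + x^5/120) - Real.sin x) (fun y => by
        have h := (Real.hasDerivAt_cos y).sub ((((hasDerivAt_pow 2 y).div_const 2).neg.const_add 1 |>.add ((hasDerivAt_pow 4 y).div_const 24)).sub ((hasDerivAt_pow 6 y).div_const 720))
        refine h.congr_deriv ?_
        simp; ring)
      (by norm_num) (fun y hy => by nlinarith [sin_le5 hy]) hx
  linarith

lemma sin_ge7 {x : ℝ} (hx : 0 ≤ x) : x - x^3/6 + x^5/120 - x^7/5040 ≤ sin x := by
  have := mono_aux (f := fun x => Real.sin x - (x - x^3/6 + x^5/120 - x^7/5040))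
      (f' := fun x => Real.cos x - (1 - x^2/2 + x^4/24 - x^6/720)) (fun y => by
        have h := (Real.hasDerivAt_sin y).sub ((((hasDerivAt_id y).sub ((hasDerivAt_pow 3 y).div_const 6)).add ((hasDerivAt_pow 5 y).div_const 120)).sub ((hasDerivAt_pow 7 y).div_const 5040))
        refine h.congr_deriv ?_
        simp; ring)
      (by norm_num) (fun y hy => by nlinarith [cos_ge6 hy]) hx
  linarith

lemma sq_tendsto : Tendsto (fun x : ℝ => x^2) (nhdsWithin 0 (Ioi 0)) (nhds 0) := by
  have : Tendsto (fun x : ℝ => x^2) (nhds 0) (nhds 0) := by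
    simpa using (continuous_pow 2).tendsto (0:ℝ)
  exact this.mono_left nhdsWithin_le_nhds

lemma mem_Ioo_ev : ∀ᶠ x : ℝ in nhdsWithin 0 (Ioi 0), x ∈ Ioo (0:ℝ) 1 :=
  Ioo_mem_nhdsGT_of_mem (by constructor <;> norm_num)

lemma tendsto_of_abs_sub_le {f : ℝ → ℝ} {c : ℝ}
    (h : ∀ x ∈ Ioo (0:ℝ) 1, |f x - c| ≤ x^2) :
    Tendsto f (nhdsWithin 0 (Ioi 0)) (nhds c) := by
  have h0 : Tendsto (fun x => f x - c) (nhdsWithin 0 (Ioi 0)) (nhds 0) := by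
    apply squeeze_zero_norm' (mem_Ioo_ev.mono (fun x hx => h x hx)) sq_tendsto
  have := h0.add_const c
  simpa using this

lemma R2_tendsto : Tendsto (fun x : ℝ => (sin x - x * cos x)/x^3)
    (nhdsWithin 0 (Ioi 0)) (nhds (1/3)) := by
  apply tendsto_of_abs_sub_le
  intro x ⟨hx0, hx1⟩
  have hx3 : (0:ℝ) < x^3 := by positivity
  have e : (sin x - x * cos x - x^3/3)/x^3 = (sin x - x * cos x)/x^3 - 1/3 := by
    rw [sub_div, div_right_comm, div_self hx3.ne']
  rw [← e, abs_div, abs_of_pos hx3, div_le_iff₀ hx3, abs_le]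
  constructor <;> nlinarith [sin_ge7 hx0.le, sin_le5 hx0.le, cos_ge6 hx0.le, cos_le4 hx0.le,
    pow_le_one₀ hx0.le hx1.le (n := 7), pow_le_one₀ hx0.le hx1.le (n := 2),
    pow_pos hx0 5, pow_pos hx0 7]

lemma R1_tendsto : Tendsto (fun x : ℝ => (3 * sin x - (3*x + x^3) * cos x)/x^5)
    (nhdsWithin 0 (Ioi 0)) (nhds (2/5)) := by
  apply tendsto_of_abs_sub_le
  intro x ⟨hx0, hx1⟩
  have hx5 : (0:ℝ) < x^5 := by positivity
  have e : (3 * sin x - (3*x + x^3) * cos x - 2/5*x^5)/x^5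
      = (3 * sin x - (3*x + x^3) * cos x)/x^5 - 2/5 := by
    rw [sub_div, mul_div_assoc, div_self hx5.ne', mul_one]
  rw [show (3 * sin x - (3*x + x^3) * cos x)/x^5 - 2/5
      = (3 * sin x - (3*x + x^3) * cos x - 2/5*x^5)/x^5 from e.symm,
    abs_div, abs_of_pos hx5, div_le_iff₀ hx5, abs_le]
  constructor <;> nlinarith [sin_ge7 hx0.le, sin_le5 hx0.le, cos_ge6 hx0.le, cos_le4 hx0.le,
    pow_le_one₀ hx0.le hx1.le (n := 7), pow_le_one₀ hx0.le hx1.le (n := 9),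
    pow_le_one₀ hx0.le hx1.le (n := 2), pow_pos hx0 7, pow_pos hx0 9]
theorem phi_limit_zero :
    Filter.Tendsto
      (fun x : ℝ => Real.log (3 * (Real.tan x - x) / x ^ 3) / Real.log (Real.tan x / x))
      (nhdsWithin 0 (Set.Ioi 0)) (nhds (6 / 5)) := by
  set l := nhdsWithin (0:ℝ) (Set.Ioi 0) with hl
  set R1 : ℝ → ℝ := fun x => (3 * sin x - (3*x + x^3) * cos x)/x^5 with hR1def
  set R2 : ℝ → ℝ := fun x => (sin x - x * cos x)/x^3 with hR2def
  set F : ℝ → ℝ := fun x => 3 * (tan x - x) / x ^ 3 with hFdef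
  set G : ℝ → ℝ := fun x => tan x / x with hGdef
  set S : ℝ → ℝ := fun y => Real.log y / (y - 1) with hSdef
  have hev : ∀ᶠ x in l, x ∈ Ioo (0:ℝ) 1 ∧ 1/5 < R1 x ∧ 1/4 < R2 x := by
    filter_upwards [mem_Ioo_ev,
      R1_tendsto.eventually (eventually_gt_nhds (by norm_num : (1:ℝ)/5 < 2/5)),
      R2_tendsto.eventually (eventually_gt_nhds (by norm_num : (1:ℝ)/4 < 1/3))] with x h1 h2 h3
    exact ⟨h1, h2, h3⟩
  have hcos : ∀ x : ℝ, x ∈ Ioo (0:ℝ) 1 → 0 < cos x := by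
    intro x hx
    nlinarith [cos_ge6 hx.1.le, pow_le_one₀ hx.1.le hx.2.le (n := 2),
      pow_le_one₀ hx.1.le hx.2.le (n := 4), pow_le_one₀ hx.1.le hx.2.le (n := 6)]
  have hF1 : ∀ x : ℝ, x ∈ Ioo (0:ℝ) 1 → F x - 1 = R1 x * x^2 / cos x := by
    intro x hx
    have hc := (hcos x hx).ne'
    have hx0 := hx.1.ne'
    simp only [hFdef, hR1def, Real.tan_eq_sin_div_cos]
    field_simp
    ring
  have hG1 : ∀ x : ℝ, x ∈ Ioo (0:ℝ) 1 → G x - 1 = R2 x * x^2 / cos x := by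
    intro x hx
    have hc := (hcos x hx).ne'
    have hx0 := hx.1.ne'
    simp only [hGdef, hR2def, Real.tan_eq_sin_div_cos]
    field_simp
  have hFpos : ∀ᶠ x in l, 0 < F x - 1 := by
    filter_upwards [hev] with x ⟨hx, hr1, _⟩
    rw [hF1 x hx]
    have h2 : (0:ℝ) < x^2 := pow_pos hx.1 2
    exact div_pos (mul_pos (by linarith) h2) (hcos x hx)
  have hGpos : ∀ᶠ x in l, 0 < G x - 1 := by
    filter_upwards [hev] with x ⟨hx, _, hr2⟩
    rw [hG1 x hx]
    have h2 : (0:ℝ) < x^2 := pow_pos hx.1 2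
    exact div_pos (mul_pos (by linarith) h2) (hcos x hx)
  have hcost : Tendsto (fun x : ℝ => cos x) l (nhds 1) := by
    have := Real.continuous_cos.tendsto 0
    rw [Real.cos_zero] at this
    exact this.mono_left nhdsWithin_le_nhds
  have hsq : Tendsto (fun x : ℝ => x^2) l (nhds 0) := by
    have : Tendsto (fun x : ℝ => x^2) (nhds 0) (nhds 0) := by
      simpa using (continuous_pow 2).tendsto (0:ℝ)
    exact this.mono_left nhdsWithin_le_nhds
  have hFt : Tendsto F l (nhdsWithin 1 {(1:ℝ)}ᶜ) := by
    rw [tendsto_nhdsWithin_iff]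
    refine ⟨?_, ?_⟩
    · have h : Tendsto (fun x => 1 + R1 x * x^2 / cos x) l (nhds (1 + (2/5) * 0 / 1)) :=
        tendsto_const_nhds.add ((R1_tendsto.mul hsq).div hcost one_ne_zero)
      rw [show (1:ℝ) + (2/5) * 0 / 1 = 1 by norm_num] at h
      apply h.congr'
      filter_upwards [hev] with x ⟨hx, _, _⟩
      have := hF1 x hx; linarith
    · filter_upwards [hFpos] with x hx
      simp only [Set.mem_compl_iff, Set.mem_singleton_iff]
      intro h; rw [h] at hx; simp at hx
  have hGt : Tendsto G l (nhdsWithin 1 {(1:ℝ)}ᶜ) := by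
    rw [tendsto_nhdsWithin_iff]
    refine ⟨?_, ?_⟩
    · have h : Tendsto (fun x => 1 + R2 x * x^2 / cos x) l (nhds (1 + (1/3) * 0 / 1)) :=
        tendsto_const_nhds.add ((R2_tendsto.mul hsq).div hcost one_ne_zero)
      rw [show (1:ℝ) + (1/3) * 0 / 1 = 1 by norm_num] at h
      apply h.congr'
      filter_upwards [hev] with x ⟨hx, _, _⟩
      have := hG1 x hx; linarith
    · filter_upwards [hGpos] with x hx
      simp only [Set.mem_compl_iff, Set.mem_singleton_iff]
      intro h; rw [h] at hx; simp at hx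
  have hslope : Tendsto S (nhdsWithin 1 {(1:ℝ)}ᶜ) (nhds 1) := by
    have hs := hasDerivAt_iff_tendsto_slope.mp (Real.hasDerivAt_log one_ne_zero)
    rw [show ((1:ℝ))⁻¹ = 1 by norm_num] at hs
    apply hs.congr
    intro y
    simp [hSdef, slope_def_field, Real.log_one]
  have hSF : Tendsto (fun x => S (F x)) l (nhds 1) := hslope.comp hFt
  have hSG : Tendsto (fun x => S (G x)) l (nhds 1) := hslope.comp hGt
  have hmain : Tendsto (fun x => S (F x) / S (G x) * (R1 x / R2 x)) l (nhds (6/5)) := by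
    have h1 : Tendsto (fun x => S (F x) / S (G x)) l (nhds (1/1)) := hSF.div hSG one_ne_zero
    have h2 : Tendsto (fun x => R1 x / R2 x) l (nhds ((2/5)/(1/3))) :=
      R1_tendsto.div R2_tendsto (by norm_num)
    have := h1.mul h2
    rw [show (1:ℝ)/1 * ((2/5)/(1/3)) = 6/5 by norm_num] at this
    exact this
  apply hmain.congr'
  filter_upwards [hev, hFpos, hGpos] with x ⟨hx, hr1, hr2⟩ hfp hgp
  have hcx := hcos x hx
  have hx2 : (0:ℝ) < x^2 := pow_pos hx.1 2
  have hR2ne : R2 x ≠ 0 := by linarith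
  have e3 : (F x - 1)/(G x - 1) = R1 x / R2 x := by
    rw [hF1 x hx, hG1 x hx]
    have hx0 := hx.1.ne'
    field_simp
  have hlogF : Real.log (F x) = S (F x) * (F x - 1) := by
    rw [hSdef]
    field_simp
  have hlogG : Real.log (G x) = S (G x) * (G x - 1) := by
    rw [hSdef]
    field_simp
  calc S (F x) / S (G x) * (R1 x / R2 x)
      = S (F x) / S (G x) * ((F x - 1) / (G x - 1)) := by rw [e3]
    _ = (S (F x) * (F x - 1)) / (S (G x) * (G x - 1)) := (div_mul_div_comm _ _ _ _)
    _ = Real.log (F x) / Real.log (G x) := by rw [hlogF, hlogG]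
end

section
/- The function g(x) = 6 log(tan x / x) − 5 log(3(tan x − x)/x³) is positive on (0, π/2). -/
open Real Set Filter

set_option maxHeartbeats 1000000

private lemma cosIco {y : ℝ} (hy : y ∈ Set.Ico (0:ℝ) (π/2)) : 0 < Real.cos y :=
  Real.cos_pos_of_mem_Ioo ⟨by linarith [Real.pi_pos, hy.1], hy.2⟩

private lemma cosIoo {y : ℝ} (hy : y ∈ Set.Ioo (0:ℝ) (π/2)) : 0 < Real.cos y :=
  Real.cos_pos_of_mem_Ioo ⟨by linarith [Real.pi_pos, hy.1], hy.2⟩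

private lemma sec_sq {y : ℝ} (hc : Real.cos y ≠ 0) : 1 / Real.cos y ^ 2 = 1 + Real.tan y ^ 2 := by
  rw [Real.tan_eq_sin_div_cos, div_pow]
  field_simp
  linarith [Real.sin_sq_add_cos_sq y]

private lemma tan_ge_aux (p p' : ℝ → ℝ) (hd : ∀ y, HasDerivAt p (p' y) y) (hp0 : p 0 = 0)
    (hle : ∀ y ∈ Set.Ico (0:ℝ) (π/2), p' y ≤ 1 + Real.tan y ^ 2) :
    ∀ x ∈ Set.Ico (0:ℝ) (π/2), p x ≤ Real.tan x := by
  have hderiv : ∀ y ∈ Set.Ioo (0:ℝ) (π/2),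
      HasDerivAt (fun z => Real.tan z - p z) (1 / Real.cos y ^ 2 - p' y) y := by
    intro y hy
    exact (Real.hasDerivAt_tan (cosIco (Ioo_subset_Ico_self hy)).ne').sub (hd y)
  have hcont : ContinuousOn (fun z => Real.tan z - p z) (Set.Ico (0:ℝ) (π/2)) := by
    apply ContinuousOn.sub
    · exact Real.continuousOn_tan.mono fun y hy => (cosIco hy).ne'
    · exact fun y _ => (hd y).continuousAt.continuousWithinAt
  have hmono : MonotoneOn (fun z => Real.tan z - p z) (Set.Ico (0:ℝ) (π/2)) := by
    apply monotoneOn_of_deriv_nonneg (convex_Ico _ _) hcont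
    · intro y hy
      rw [interior_Ico] at hy
      exact (hderiv y hy).differentiableAt.differentiableWithinAt
    · intro y hy
      rw [interior_Ico] at hy
      rw [(hderiv y hy).deriv, sec_sq (cosIco (Ioo_subset_Ico_self hy)).ne']
      have := hle y (Ioo_subset_Ico_self hy)
      linarith
  intro x hx
  have h0 : (0:ℝ) ∈ Set.Ico (0:ℝ) (π/2) := ⟨le_refl _, by linarith [Real.pi_pos]⟩
  have := hmono h0 hx hx.1
  simp only [Real.tan_zero, hp0, sub_zero] at this
  linarith

private lemma dT2 (y : ℝ) : HasDerivAt (fun y : ℝ => y + y^3/3) (1 + y^2) y := by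
  have h := (hasDerivAt_id y).add ((hasDerivAt_pow 3 y).div_const 3)
  refine h.congr_deriv ?_
  push_cast; ring

private lemma dT3 (y : ℝ) :
    HasDerivAt (fun y : ℝ => y + y^3/3 + 2*y^5/15) (1 + y^2 + 2/3*y^4) y := by
  have h := ((hasDerivAt_id y).add ((hasDerivAt_pow 3 y).div_const 3)).add
    (((hasDerivAt_pow 5 y).const_mul (2:ℝ)).div_const 15)
  refine h.congr_deriv ?_
  push_cast; ring

private lemma dT4 (y : ℝ) : HasDerivAt (fun y : ℝ => y + y^3/3 + 2*y^5/15 + 17*y^7/315)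
    (1 + y^2 + 2/3*y^4 + 17/45*y^6) y := by
  have h := (((hasDerivAt_id y).add ((hasDerivAt_pow 3 y).div_const 3)).add
    (((hasDerivAt_pow 5 y).const_mul (2:ℝ)).div_const 15)).add
    (((hasDerivAt_pow 7 y).const_mul (17:ℝ)).div_const 315)
  refine h.congr_deriv ?_
  push_cast; ring

private lemma dT5 (y : ℝ) :
    HasDerivAt (fun y : ℝ => y + y^3/3 + 2*y^5/15 + 17*y^7/315 + 62*y^9/2835)
    (1 + y^2 + 2/3*y^4 + 17/45*y^6 + 62/315*y^8) y := by
  have h := ((((hasDerivAt_id y).add ((hasDerivAt_pow 3 y).div_const 3)).add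
    (((hasDerivAt_pow 5 y).const_mul (2:ℝ)).div_const 15)).add
    (((hasDerivAt_pow 7 y).const_mul (17:ℝ)).div_const 315)).add
    (((hasDerivAt_pow 9 y).const_mul (62:ℝ)).div_const 2835)
  refine h.congr_deriv ?_
  push_cast; ring

private lemma tan_lb : ∀ x ∈ Set.Ico (0:ℝ) (π/2),
    x + x^3/3 + 2*x^5/15 + 17*x^7/315 + 62*x^9/2835 ≤ Real.tan x := by
  have h1 : ∀ x ∈ Set.Ico (0:ℝ) (π/2), x ≤ Real.tan x := by
    apply tan_ge_aux _ (fun _ => 1) (fun y => hasDerivAt_id y) rfl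
    intro y _; nlinarith [sq_nonneg (Real.tan y)]
  have h2 : ∀ x ∈ Set.Ico (0:ℝ) (π/2), x + x^3/3 ≤ Real.tan x := by
    apply tan_ge_aux _ _ dT2 (by norm_num)
    intro y hy
    have := h1 y hy
    nlinarith [hy.1]
  have h3 : ∀ x ∈ Set.Ico (0:ℝ) (π/2), x + x^3/3 + 2*x^5/15 ≤ Real.tan x := by
    apply tan_ge_aux _ _ dT3 (by norm_num)
    intro y hy
    have h := h2 y hy
    have hy0 := hy.1
    nlinarith [sq_nonneg (y^3), mul_nonneg (mul_nonneg hy0 hy0) hy0]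
  have h4 : ∀ x ∈ Set.Ico (0:ℝ) (π/2), x + x^3/3 + 2*x^5/15 + 17*x^7/315 ≤ Real.tan x := by
    apply tan_ge_aux _ _ dT4 (by norm_num)
    intro y hy
    have h := h3 y hy
    have hy0 := hy.1
    have hT0 : (0:ℝ) ≤ y + y^3/3 + 2*y^5/15 := by positivity
    nlinarith [pow_nonneg hy0 8, pow_nonneg hy0 10]
  apply tan_ge_aux _ _ dT5 (by norm_num)
  intro y hy
  have h := h4 y hy
  have hy0 := hy.1
  have hT0 : (0:ℝ) ≤ y + y^3/3 + 2*y^5/15 + 17*y^7/315 := by positivity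
  nlinarith [pow_nonneg hy0 10, pow_nonneg hy0 12, pow_nonneg hy0 14]

private lemma G_pos_aux (x : ℝ) (hx : 0 < x) (hx2 : x < π/2) :
    0 < x * Real.tan x ^ 3 - 3*x*Real.tan x - 6*x^2 - 6*x^2*Real.tan x ^2
      + 9*Real.tan x ^2 := by
  have hT := tan_lb x ⟨hx.le, hx2⟩
  have hpi : x < 1.58 := by
    have := Real.pi_lt_d2
    linarith
  set t := Real.tan x with htdef
  set T : ℝ := x + x^3/3 + 2*x^5/15 + 17*x^7/315 + 62*x^9/2835 with hTdef
  have hTx : x ≤ T := by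
    rw [hTdef]
    nlinarith [pow_pos hx 3, pow_pos hx 5, pow_pos hx 7, pow_pos hx 9]
  have hP : 0 < x*T^3 - 3*x*T - 6*x^2 - 6*x^2*T^2 + 9*T^2 := by
    have expand : x*T^3 - 3*x*T - 6*x^2 - 6*x^2*T^2 + 9*T^2
        = x^8 * (8/105 + 152/1575*x^2 - 10/189*x^4 + 2734/99225*x^6 + 28373/1488375*x^8
          + 39497/4465125*x^10 + 8726/2679075*x^12 + 88873/56260575*x^14 + 21514/56260575*x^16
          + 65348/843908625*x^18 + 238328/22785532875*x^20) := by
      rw [hTdef]; ring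
    rw [expand]
    apply mul_pos (pow_pos hx 8)
    linarith [sq_nonneg (x/4 - 20/189*x^3), pow_nonneg hx.le 2, pow_nonneg hx.le 6,
      pow_nonneg hx.le 8, pow_nonneg hx.le 10, pow_nonneg hx.le 12, pow_nonneg hx.le 14,
      pow_nonneg hx.le 16, pow_nonneg hx.le 18, pow_nonneg hx.le 20]
  have hH : 0 ≤ 3*x*T^2 + (18 - 12*x^2)*T - 3*x := by
    have expand : 3*x*T^2 + (18 - 12*x^2)*T - 3*x
        = x * (15 - 3*x^2 + 2/5*x^4 + 53/105*x^6 + 106/315*x^8 + 142/4725*x^10 + 176/2025*x^12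
          + 2603/99225*x^14 + 2108/297675*x^16 + 3844/2679075*x^18) := by
      rw [hTdef]; ring
    rw [expand]
    apply mul_nonneg hx.le
    linarith [mul_pos (by linarith : (0:ℝ) < 1.58 - x) (by linarith : (0:ℝ) < 1.58 + x),
      pow_nonneg hx.le 4, pow_nonneg hx.le 6, pow_nonneg hx.le 8, pow_nonneg hx.le 10,
      pow_nonneg hx.le 12, pow_nonneg hx.le 14, pow_nonneg hx.le 16, pow_nonneg hx.le 18]
  have hM : 0 ≤ 3*x*T + 9 - 6*x^2 := by
    linarith [mul_nonneg hx.le (sub_nonneg.2 hTx),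
      mul_pos (by linarith : (0:ℝ) < 1.58 - x) (by linarith : (0:ℝ) < 1.58 + x)]
  have hident : x*t^3 - 3*x*t - 6*x^2 - 6*x^2*t^2 + 9*t^2
      = (x*T^3 - 3*x*T - 6*x^2 - 6*x^2*T^2 + 9*T^2)
        + (t - T) * (3*x*T^2 + (18 - 12*x^2)*T - 3*x)
        + (t - T)^2 * (3*x*T + 9 - 6*x^2) + x*(t - T)^3 := by ring
  have h1 : 0 ≤ (t - T) * (3*x*T^2 + (18 - 12*x^2)*T - 3*x) :=
    mul_nonneg (sub_nonneg.2 hT) hH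
  have h2 : 0 ≤ (t - T)^2 * (3*x*T + 9 - 6*x^2) := mul_nonneg (sq_nonneg _) hM
  have h3 : 0 ≤ x*(t - T)^3 := mul_nonneg hx.le (pow_nonneg (sub_nonneg.2 hT) 3)
  linarith

private noncomputable def F1 : ℝ → ℝ := fun y =>
  6 * Real.log (Real.tan y) + 9 * Real.log y - 5 * Real.log (Real.tan y - y) - 5 * Real.log 3

private lemma F1_hasDeriv {y : ℝ} (hy : y ∈ Set.Ioo (0:ℝ) (π/2)) :
    HasDerivAt F1 (6*((1/Real.cos y^2)/Real.tan y) + 9*y⁻¹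
      - 5*((1/Real.cos y^2 - 1)/(Real.tan y - y))) y := by
  have hc := (cosIoo hy).ne'
  have ht : 0 < Real.tan y := Real.tan_pos_of_pos_of_lt_pi_div_two hy.1 hy.2
  have hty : 0 < Real.tan y - y := sub_pos.2 (Real.lt_tan hy.1 hy.2)
  have L1 : HasDerivAt (fun z => Real.log (Real.tan z)) ((1/Real.cos y^2)/Real.tan y) y :=
    (Real.hasDerivAt_tan hc).log ht.ne'
  have L2 : HasDerivAt Real.log y⁻¹ y := Real.hasDerivAt_log hy.1.ne'
  have L3 : HasDerivAt (fun z => Real.log (Real.tan z - z))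
      ((1/Real.cos y^2 - 1)/(Real.tan y - y)) y :=
    ((Real.hasDerivAt_tan hc).sub (hasDerivAt_id y)).log hty.ne'
  exact (((L1.const_mul 6).add (L2.const_mul 9)).sub (L3.const_mul 5)).sub_const _

private lemma F1_mono : StrictMonoOn F1 (Set.Ioo (0:ℝ) (π/2)) := by
  apply strictMonoOn_of_deriv_pos (convex_Ioo _ _)
  · exact fun y hy => (F1_hasDeriv hy).continuousAt.continuousWithinAt
  · intro y hy
    rw [interior_Ioo] at hy
    rw [(F1_hasDeriv hy).deriv]
    have hc := (cosIoo hy).ne'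
    have hsec : 1/Real.cos y^2 = 1 + Real.tan y^2 := sec_sq hc
    have ht : 0 < Real.tan y := Real.tan_pos_of_pos_of_lt_pi_div_two hy.1 hy.2
    have hty : 0 < Real.tan y - y := sub_pos.2 (Real.lt_tan hy.1 hy.2)
    have hG := G_pos_aux y hy.1 hy.2
    rw [hsec]
    have key : 6*((1 + Real.tan y^2)/Real.tan y) + 9*y⁻¹
        - 5*((1 + Real.tan y^2 - 1)/(Real.tan y - y))
        = (y * Real.tan y ^ 3 - 3*y*Real.tan y - 6*y^2 - 6*y^2*Real.tan y ^2 + 9*Real.tan y ^2)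
          / (y * Real.tan y * (Real.tan y - y)) := by
      rw [eq_div_iff (mul_pos (mul_pos hy.1 ht) hty).ne']
      field_simp [hy.1.ne', ht.ne', hty.ne']
      ring
    rw [key]
    exact div_pos hG (mul_pos (mul_pos hy.1 ht) hty)

private lemma tendsto_tan_div :
    Tendsto (fun y => Real.tan y / y) (nhdsWithin 0 (Set.Ioi 0)) (nhds 1) := by
  have hc : Real.cos 0 ≠ 0 := by simp
  have h := Real.hasDerivAt_tan hc
  rw [hasDerivAt_iff_tendsto_slope] at h
  have h2 : Tendsto (slope Real.tan 0) (nhdsWithin 0 (Set.Ioi 0)) (nhds (1/Real.cos 0^2)) :=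
    h.mono_left (nhdsWithin_mono 0 (fun y hy => ne_of_gt hy))
  have heq : (1:ℝ)/Real.cos 0^2 = 1 := by simp
  rw [heq] at h2
  apply h2.congr'
  filter_upwards [self_mem_nhdsWithin] with y hy
  simp [slope, hy, div_eq_inv_mul]

private lemma tendsto_cub : Tendsto (fun y => (Real.tan y - y) / y^3) (nhdsWithin 0 (Set.Ioi 0))
    (nhds (1/3)) := by
  have hc0 : Real.cos 0 ≠ 0 := by simp
  apply HasDerivAt.lhopital_zero_right_on_Ioo (a := 0) (b := π/2)
    (f' := fun y => 1/Real.cos y^2 - 1) (g' := fun y => 3*y^2)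
    (by positivity : (0:ℝ) < π/2)
  · intro y hy
    exact (Real.hasDerivAt_tan (cosIoo hy).ne').sub (hasDerivAt_id y)
  · intro y hy
    simpa using (hasDerivAt_pow 3 y)
  · intro y hy
    exact ne_of_gt (by nlinarith [hy.1])
  · have hcont : ContinuousAt (fun y => Real.tan y - y) 0 :=
      ((Real.continuousAt_tan.2 hc0).sub continuousAt_id)
    have := hcont.tendsto
    simp only [Real.tan_zero, sub_zero] at this
    exact this.mono_left nhdsWithin_le_nhds
  · have : Tendsto (fun y : ℝ => y^3) (nhds 0) (nhds 0) := by
      simpa using (continuous_pow 3).tendsto (0:ℝ)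
    exact this.mono_left nhdsWithin_le_nhds
  · have h := (tendsto_tan_div.pow 2).div_const 3
    have heq : (1:ℝ)^2/3 = 1/3 := by norm_num
    rw [heq] at h
    apply h.congr'
    filter_upwards [Ioo_mem_nhdsGT_of_mem (Set.left_mem_Ico.2 (by positivity : (0:ℝ) < π/2))]
      with y hy
    have hc := (cosIoo hy).ne'
    rw [sec_sq hc]
    field_simp
    ring

private lemma F_lim : Tendsto (fun y => 6 * Real.log (Real.tan y / y)
    - 5 * Real.log (3 * (Real.tan y - y) / y ^ 3)) (nhdsWithin 0 (Set.Ioi 0)) (nhds 0) := by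
  have h1 : Tendsto (fun y => Real.log (Real.tan y / y)) (nhdsWithin 0 (Set.Ioi 0)) (nhds 0) := by
    have := (Real.continuousAt_log one_ne_zero).tendsto.comp tendsto_tan_div
    simpa [Function.comp_def] using this
  have h2 : Tendsto (fun y => Real.log (3 * (Real.tan y - y) / y ^ 3))
      (nhdsWithin 0 (Set.Ioi 0)) (nhds 0) := by
    have hb : Tendsto (fun y => 3 * ((Real.tan y - y) / y^3)) (nhdsWithin 0 (Set.Ioi 0))
        (nhds 1) := by
      have := tendsto_cub.const_mul (3:ℝ)
      norm_num at this
      exact this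
    have := (Real.continuousAt_log one_ne_zero).tendsto.comp hb
    simp only [Real.log_one] at this
    apply this.congr
    intro y
    simp [mul_div_assoc]
  have := (h1.const_mul 6).sub (h2.const_mul 5)
  simpa using this

private lemma F_eq_F1 {y : ℝ} (hy : y ∈ Set.Ioo (0:ℝ) (π/2)) :
    6 * Real.log (Real.tan y / y) - 5 * Real.log (3 * (Real.tan y - y) / y ^ 3) = F1 y := by
  have ht : 0 < Real.tan y := Real.tan_pos_of_pos_of_lt_pi_div_two hy.1 hy.2
  have hty : 0 < Real.tan y - y := sub_pos.2 (Real.lt_tan hy.1 hy.2)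
  have hy1 := hy.1
  rw [Real.log_div ht.ne' hy1.ne',
    Real.log_div (by positivity) (by positivity),
    Real.log_mul (by norm_num) hty.ne', Real.log_pow]
  unfold F1
  push_cast
  ring

theorem g_pos (x : ℝ) (hx : 0 < x) (hx2 : x < Real.pi / 2) :
    0 < 6 * Real.log (Real.tan x / x) - 5 * Real.log (3 * (Real.tan x - x) / x ^ 3) := by
  have hx' : x ∈ Set.Ioo (0:ℝ) (π/2) := ⟨hx, hx2⟩
  have hmid : x/2 ∈ Set.Ioo (0:ℝ) (π/2) := ⟨by linarith, by linarith⟩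
  have hlt : F1 (x/2) < F1 x := F1_mono hmid hx' (by linarith)
  have hge : 0 ≤ F1 (x/2) := by
    apply le_of_tendsto F_lim
    filter_upwards [Ioo_mem_nhdsGT_of_mem (Set.left_mem_Ico.2 (by linarith : (0:ℝ) < x/2))]
      with y hy
    have hy' : y ∈ Set.Ioo (0:ℝ) (π/2) := ⟨hy.1, by linarith [hy.2]⟩
    rw [F_eq_F1 hy']
    exact (F1_mono hy' hmid (hy.2)).le
  rw [F_eq_F1 hx']
  linarith
end
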